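/- arXiv:2405.09362 — 7 statements merged into one kernel-verified Lean document; each statement's English description precedes it below -/
import Mathlib

section
/- Let β ∈ (0,1), p ≥ 1, and let (λ_i)_{i≥1} be a sequence of positive reals satisfying c₁ i^{-1/β} ≤ λ_i ≤ c₂ i^{-1/β} for all i ≥ 1, where 0 < c₁ ≤ c₂ are constants. Define the p-effective dimension N_p(λ) := Σ_{i=1}^∞ (λ_i/(λ_i + λ))^p. Then there exist constants 0 < c ≤ C, depending only on p, β, c₁, c₂, such that c·λ^{-β} ≤ N_p(λ) ≤ C·λ^{-β} for every λ ∈ (0,1]. -/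
open scoped ENNReal

open Real Finset

lemma mvt_step (s : ℝ) (hs : 1 < s) (x : ℝ) (hx : 1 ≤ x) :
    (s - 1) * (x + 1) ^ (-s) ≤ x ^ (1 - s) - (x + 1) ^ (1 - s) := by
  have hx0 : (0:ℝ) < x := lt_of_lt_of_le one_pos hx
  obtain ⟨c, hc, hslope⟩ :=
    exists_hasDerivAt_eq_slope (fun t : ℝ => t ^ (1 - s))
      (fun t : ℝ => (1 - s) * t ^ (1 - s - 1)) (by linarith : x < x + 1)
      (ContinuousOn.rpow_const continuousOn_id (fun t ht => by
        left; have : (0:ℝ) < t := lt_of_lt_of_le hx0 ht.1; exact ne_of_gt this))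
      (fun t ht => Real.hasDerivAt_rpow_const (Or.inl (by
        have : (0:ℝ) < t := lt_of_lt_of_le hx0 (le_of_lt ht.1); exact ne_of_gt this)))
  have hc0 : (0:ℝ) < c := lt_of_lt_of_le hx0 hc.1.le
  have hcx : c ≤ x + 1 := hc.2.le
  have h1 : (1 - s) * c ^ (-s) = (x + 1) ^ (1 - s) - x ^ (1 - s) := by
    have := hslope
    simp only [add_sub_cancel_left, div_one] at this
    rw [show (1 : ℝ) - s - 1 = -s by ring] at this
    linarith [this]
  have h2 : x ^ (1 - s) - (x + 1) ^ (1 - s) = (s - 1) * c ^ (-s) := by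
    nlinarith [h1]
  rw [h2]
  have : (x + 1) ^ (-s) ≤ c ^ (-s) :=
    Real.rpow_le_rpow_of_nonpos hc0 hcx (by linarith)
  exact mul_le_mul_of_nonneg_left this (by linarith)

lemma tail_bound (s : ℝ) (hs : 1 < s) (N : ℕ) (hN : 1 ≤ N) :
    ∑' i : ℕ, ((N : ℝ) + i + 1) ^ (-s) ≤ (1 / (s - 1)) * (N : ℝ) ^ (1 - s) := by
  have hs1 : (0:ℝ) < s - 1 := by linarith
  have hN0 : (1:ℝ) ≤ (N : ℝ) := by exact_mod_cast hN
  apply Real.tsum_le_of_sum_range_le (fun n => Real.rpow_nonneg (by positivity) _)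
  intro n
  have key : ∀ i : ℕ, ((N:ℝ) + i + 1) ^ (-s) ≤
      (1/(s-1)) * (((N:ℝ) + i) ^ (1-s) - ((N:ℝ) + i + 1) ^ (1-s)) := by
    intro i
    have h := mvt_step s hs ((N:ℝ) + i) (by linarith [Nat.cast_nonneg (α := ℝ) i])
    rw [one_div, inv_mul_eq_div, le_div_iff₀ hs1]
    nlinarith [h]
  calc ∑ i ∈ range n, ((N:ℝ) + i + 1) ^ (-s)
      ≤ ∑ i ∈ range n, (1/(s-1)) * (((N:ℝ) + i) ^ (1-s) - ((N:ℝ) + i + 1) ^ (1-s)) :=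
        Finset.sum_le_sum (fun i _ => key i)
    _ = (1/(s-1)) * ∑ i ∈ range n, ((fun j : ℕ => ((N:ℝ) + j) ^ (1-s)) i
          - (fun j : ℕ => ((N:ℝ) + j) ^ (1-s)) (i+1)) := by
        rw [← Finset.mul_sum]; congr 1; apply Finset.sum_congr rfl; intro i _
        push_cast; ring_nf
    _ = (1/(s-1)) * (((N:ℝ) + 0) ^ (1-s) - ((N:ℝ) + n) ^ (1-s)) := by
        rw [Finset.sum_range_sub' (fun j : ℕ => ((N:ℝ) + j) ^ (1-s))]; norm_num
    _ ≤ (1/(s-1)) * (N:ℝ) ^ (1-s) := by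
        have h0 : (0:ℝ) ≤ ((N:ℝ) + n) ^ (1-s) := Real.rpow_nonneg (by positivity) _
        have h1 : ((N:ℝ) + 0) ^ (1-s) = (N:ℝ) ^ (1-s) := by norm_num
        rw [h1]; apply mul_le_mul_of_nonneg_left _ (by positivity)
        linarith


/-- two-sided estimate `N_p(λ) ≍ λ^{-β}` of the `p`-effective dimension
`N_p(λ) = ∑_{i≥1} (λ_i/(λ_i+λ))^p` under the eigenvalue decay condition
`c₁ i^{-1/β} ≤ λ_i ≤ c₂ i^{-1/β}`. -/
theorem stmt0 (β p c₁ c₂ : ℝ) (hβ : β ∈ Set.Ioo (0:ℝ) 1) (hp : 1 ≤ p)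
    (hc₁ : 0 < c₁) (hc₁c₂ : c₁ ≤ c₂)
    (lam : ℕ → ℝ) (hlampos : ∀ i, 0 < lam i)
    (hdecay : ∀ i : ℕ, c₁ * ((i + 1 : ℝ)) ^ (-(1 / β)) ≤ lam i ∧
      lam i ≤ c₂ * ((i + 1 : ℝ)) ^ (-(1 / β))) :
    ∃ c C : ℝ, 0 < c ∧ c ≤ C ∧
      ∀ lambda : ℝ, lambda ∈ Set.Ioc (0:ℝ) 1 →
        c * lambda ^ (-β) ≤ ∑' i : ℕ, (lam i / (lam i + lambda)) ^ p ∧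
        (∑' i : ℕ, (lam i / (lam i + lambda)) ^ p) ≤ C * lambda ^ (-β) := by
  obtain ⟨hβ0, hβ1⟩ := hβ
  have hc₂ : 0 < c₂ := lt_of_lt_of_le hc₁ hc₁c₂
  have hs : 1 < 1/β := (one_lt_div hβ0).2 hβ1
  have hbase : Summable (fun i : ℕ => ((i:ℝ) + 1) ^ (-(1/β))) := by
    have h1 : Summable (fun n : ℕ => (n:ℝ) ^ (-(1/β))) :=
      Real.summable_nat_rpow.2 (by linarith)
    have h2 := (summable_nat_add_iff 1).2 h1
    refine h2.congr fun n => ?_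
    push_cast; ring_nf
  set A : ℝ := (c₁/(c₂+1))^p * c₁^β with hA_def
  set B : ℝ := ((1:ℝ)/2)^p * (1/2) * c₁^β with hB_def
  set Cup : ℝ := c₂^β + 1 + (1/(1/β-1)) * c₂^β with hCup_def
  have hA : 0 < A := mul_pos (rpow_pos_of_pos (by positivity) p) (rpow_pos_of_pos hc₁ β)
  have hB : 0 < B := by
    have := rpow_pos_of_pos (show (0:ℝ) < 1/2 by norm_num) p
    have := rpow_pos_of_pos hc₁ β
    positivity
  refine ⟨min A B, max (min A B) Cup, lt_min hA hB, le_max_left _ _, ?_⟩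
  intro lambda hlam
  obtain ⟨hl0, hl1⟩ := hlam
  set F : ℕ → ℝ := fun i => (lam i / (lam i + lambda)) ^ p with hF_def
  have hratio_pos : ∀ i, 0 < lam i / (lam i + lambda) :=
    fun i => div_pos (hlampos i) (by linarith [hlampos i])
  have hratio_le_one : ∀ i, lam i / (lam i + lambda) ≤ 1 := fun i => by
    rw [div_le_one (by linarith [hlampos i])]; linarith [hlampos i]
  have hF_nonneg : ∀ i, 0 ≤ F i := fun i => rpow_nonneg (hratio_pos i).le p
  have hF_le_one : ∀ i, F i ≤ 1 :=
    fun i => Real.rpow_le_one (hratio_pos i).le (hratio_le_one i) (by linarith)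
  have hF_le_ratio : ∀ i, F i ≤ lam i / (lam i + lambda) := fun i => by
    have h := Real.rpow_le_rpow_of_exponent_ge (hratio_pos i) (hratio_le_one i) hp
    simpa using h
  have hF_le : ∀ i, F i ≤ (c₂ / lambda) * ((i:ℝ)+1)^(-(1/β)) := by
    intro i
    have h1 : lam i / (lam i + lambda) ≤ lam i / lambda := by
      gcongr
      · exact (hlampos i).le
      · linarith [hlampos i]
    have h2 : lam i / lambda ≤ (c₂ * ((i:ℝ)+1)^(-(1/β))) / lambda := by
      gcongr
      exact (hdecay i).2
    calc F i ≤ lam i / (lam i + lambda) := hF_le_ratio i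
      _ ≤ (c₂ * ((i:ℝ)+1)^(-(1/β))) / lambda := le_trans h1 h2
      _ = (c₂ / lambda) * ((i:ℝ)+1)^(-(1/β)) := by ring
  have hsumF : Summable F :=
    Summable.of_nonneg_of_le hF_nonneg hF_le (hbase.mul_left (c₂/lambda))
  have hlamneg : 1 ≤ lambda ^ (-β) :=
    Real.one_le_rpow_of_pos_of_le_one_of_nonpos hl0 hl1 (by linarith)
  have hlamnegpos : (0:ℝ) < lambda ^ (-β) := rpow_pos_of_pos hl0 _
  have hc2split : (c₂/lambda)^β = c₂^β * lambda^(-β) := by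
    rw [Real.div_rpow hc₂.le hl0.le, Real.rpow_neg hl0.le, div_eq_mul_inv]
  have hc1split : (c₁/lambda)^β = c₁^β * lambda^(-β) := by
    rw [Real.div_rpow hc₁.le hl0.le, Real.rpow_neg hl0.le, div_eq_mul_inv]
  constructor
  · -- lower bound
    rcases le_or_gt 1 ((c₁/lambda)^β) with hcase | hcase
    · -- many large eigenvalues
      set K := ⌊(c₁/lambda)^β⌋₊ with hK_def
      have hK1 : 1 ≤ K := Nat.le_floor (by exact_mod_cast hcase)
      have hKy : (K:ℝ) ≤ (c₁/lambda)^β := Nat.floor_le (by positivity)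
      have hyK2 : (c₁/lambda)^β / 2 ≤ (K:ℝ) := by
        rcases le_or_gt ((c₁/lambda)^β) 2 with h2 | h2
        · have : (1:ℝ) ≤ (K:ℝ) := by exact_mod_cast hK1
          linarith
        · have := Nat.lt_floor_add_one ((c₁/lambda)^β)
          linarith
      have hterm : ∀ i < K, ((1:ℝ)/2)^p ≤ F i := by
        intro i hi
        have hi1 : ((i:ℝ)+1) ≤ (c₁/lambda)^β := by
          have hik : (i+1 : ℕ) ≤ K := hi
          calc ((i:ℝ)+1) = ((i+1:ℕ):ℝ) := by push_cast; ring
            _ ≤ (K:ℝ) := by exact_mod_cast hik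
            _ ≤ _ := hKy
        have hpos : (0:ℝ) < (i:ℝ)+1 := by positivity
        have hstep : ((c₁/lambda)^β)^(-(1/β)) ≤ ((i:ℝ)+1)^(-(1/β)) :=
          Real.rpow_le_rpow_of_nonpos hpos hi1 (by
            have : (0:ℝ) < 1/β := by positivity
            linarith)
        have hval : ((c₁/lambda)^β)^(-(1/β)) = lambda/c₁ := by
          rw [← Real.rpow_mul (by positivity : (0:ℝ) ≤ c₁/lambda)]
          have hb : β * -(1/β) = -1 := by field_simp
          rw [hb, Real.rpow_neg_one, inv_div]
        have hlam_ge : lambda ≤ lam i := by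
          have hd1 := (hdecay i).1
          have h2 : lambda/c₁ ≤ ((i:ℝ)+1)^(-(1/β)) := hval ▸ hstep
          calc lambda = c₁ * (lambda/c₁) := by field_simp
            _ ≤ c₁ * ((i:ℝ)+1)^(-(1/β)) := mul_le_mul_of_nonneg_left h2 hc₁.le
            _ ≤ lam i := hd1
        have hr : (1:ℝ)/2 ≤ lam i/(lam i + lambda) := by
          rw [le_div_iff₀ (by linarith [hlampos i])]
          linarith [hlampos i]
        exact Real.rpow_le_rpow (by norm_num) hr (by linarith)
      have hsumK : (K:ℝ) * ((1:ℝ)/2)^p ≤ ∑ i ∈ range K, F i := by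
        have : ∑ i ∈ range K, ((1:ℝ)/2)^p = (K:ℝ) * ((1:ℝ)/2)^p := by
          rw [Finset.sum_const, card_range]; simp [nsmul_eq_mul]
        rw [← this]
        exact Finset.sum_le_sum (fun i hi => hterm i (Finset.mem_range.1 hi))
      have hle : ∑ i ∈ range K, F i ≤ ∑' i, F i :=
        Summable.sum_le_tsum _ (fun i _ => hF_nonneg i) hsumF
      have hBle : B * lambda^(-β) ≤ (K:ℝ) * ((1:ℝ)/2)^p := by
        have hhalf : (0:ℝ) < ((1:ℝ)/2)^p := rpow_pos_of_pos (by norm_num) p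
        have : B * lambda^(-β) = ((1:ℝ)/2)^p * ((c₁/lambda)^β / 2) := by
          rw [hB_def, hc1split]; ring
        rw [this]
        calc ((1:ℝ)/2)^p * ((c₁/lambda)^β / 2) ≤ ((1:ℝ)/2)^p * (K:ℝ) :=
              mul_le_mul_of_nonneg_left hyK2 hhalf.le
          _ = (K:ℝ) * ((1:ℝ)/2)^p := by ring
      calc min A B * lambda^(-β) ≤ B * lambda^(-β) :=
            mul_le_mul_of_nonneg_right (min_le_right _ _) hlamnegpos.le
        _ ≤ (K:ℝ) * ((1:ℝ)/2)^p := hBle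
        _ ≤ ∑ i ∈ range K, F i := hsumK
        _ ≤ ∑' i, F i := hle
    · -- only the first term
      have h0 : c₁ ≤ lam 0 := by
        have := (hdecay 0).1
        simpa using this
      have h0' : lam 0 ≤ c₂ := by
        have := (hdecay 0).2
        simpa using this
      have hr0 : c₁/(c₂+1) ≤ lam 0 / (lam 0 + lambda) := by
        apply div_le_div₀ (hlampos 0).le h0 (by linarith [hlampos 0])
        linarith
      have hF0 : (c₁/(c₂+1))^p ≤ F 0 :=
        Real.rpow_le_rpow (by positivity) hr0 (by linarith)
      have hle : F 0 ≤ ∑' i, F i := Summable.le_tsum hsumF 0 (fun i _ => hF_nonneg i)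
      have hAle : A * lambda^(-β) ≤ (c₁/(c₂+1))^p := by
        have h1 : A * lambda^(-β) = (c₁/(c₂+1))^p * (c₁/lambda)^β := by
          rw [hA_def, hc1split]; ring
        rw [h1]
        have h2 : (0:ℝ) < (c₁/(c₂+1))^p := rpow_pos_of_pos (by positivity) p
        nlinarith [rpow_pos_of_pos (show (0:ℝ) < c₁/lambda by positivity) β]
      calc min A B * lambda^(-β) ≤ A * lambda^(-β) :=
            mul_le_mul_of_nonneg_right (min_le_left _ _) hlamnegpos.le
        _ ≤ (c₁/(c₂+1))^p := hAle
        _ ≤ F 0 := hF0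
        _ ≤ ∑' i, F i := hle
  · -- upper bound
    have hy0 : (0:ℝ) < (c₂/lambda)^β := rpow_pos_of_pos (by positivity) β
    set N := ⌈(c₂/lambda)^β⌉₊ with hN_def
    have hN1 : 1 ≤ N := Nat.ceil_pos.2 hy0
    have hyN : (c₂/lambda)^β ≤ (N:ℝ) := Nat.le_ceil _
    have hNy : (N:ℝ) ≤ (c₂/lambda)^β + 1 := (Nat.ceil_lt_add_one hy0.le).le
    have hsplit := (Summable.sum_add_tsum_nat_add (f := F) N hsumF).symm
    have hhead : ∑ i ∈ range N, F i ≤ (N:ℝ) := by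
      calc ∑ i ∈ range N, F i ≤ ∑ i ∈ range N, (1:ℝ) :=
            Finset.sum_le_sum (fun i _ => hF_le_one i)
        _ = (N:ℝ) := by simp
    have hsum_tail_rhs : Summable (fun i : ℕ => ((N:ℝ)+i+1)^(-(1/β))) := by
      have h2 := (summable_nat_add_iff N).2 hbase
      refine h2.congr fun i => ?_
      push_cast; ring_nf
    have htail1 : ∀ i : ℕ, F (i + N) ≤ (c₂/lambda) * ((N:ℝ)+i+1)^(-(1/β)) := by
      intro i
      calc F (i+N) ≤ (c₂/lambda) * (((i+N:ℕ):ℝ)+1)^(-(1/β)) := hF_le _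
        _ = (c₂/lambda) * ((N:ℝ)+i+1)^(-(1/β)) := by push_cast; ring_nf
    have htail : ∑' i, F (i + N) ≤ (c₂/lambda) * ∑' i : ℕ, ((N:ℝ)+i+1)^(-(1/β)) := by
      rw [← tsum_mul_left]
      exact Summable.tsum_le_tsum htail1 ((summable_nat_add_iff N).2 hsumF)
        (hsum_tail_rhs.mul_left _)
    have htb := tail_bound (1/β) hs N hN1
    have hmono : (N:ℝ)^(1-1/β) ≤ ((c₂/lambda)^β)^(1-1/β) :=
      Real.rpow_le_rpow_of_nonpos hy0 hyN (by
        have : (1:ℝ) < 1/β := hs; linarith)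
    have hxx : ((c₂/lambda)^β)^(1-1/β) = (c₂/lambda)^(β - 1) := by
      rw [← Real.rpow_mul (by positivity : (0:ℝ) ≤ c₂/lambda)]
      congr 1
      field_simp
    have hprod : (c₂/lambda) * (c₂/lambda)^(β-1) = (c₂/lambda)^β := by
      nth_rewrite 1 [← Real.rpow_one (c₂/lambda)]
      rw [← Real.rpow_add (by positivity)]
      norm_num
    have hslope1 : (0:ℝ) < 1/β - 1 := by linarith
    have htail2 : ∑' i, F (i + N) ≤ (1/(1/β-1)) * (c₂/lambda)^β := by
      have hc2l : (0:ℝ) < c₂/lambda := by positivity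
      calc ∑' i, F (i + N) ≤ (c₂/lambda) * ∑' i : ℕ, ((N:ℝ)+i+1)^(-(1/β)) := htail
        _ ≤ (c₂/lambda) * ((1/(1/β-1)) * (N:ℝ)^(1-1/β)) :=
            mul_le_mul_of_nonneg_left htb hc2l.le
        _ ≤ (c₂/lambda) * ((1/(1/β-1)) * (c₂/lambda)^(β-1)) := by
            apply mul_le_mul_of_nonneg_left _ hc2l.le
            apply mul_le_mul_of_nonneg_left _ (by positivity)
            rw [← hxx]; exact hmono
        _ = (1/(1/β-1)) * ((c₂/lambda) * (c₂/lambda)^(β-1)) := by ring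
        _ = (1/(1/β-1)) * (c₂/lambda)^β := by rw [hprod]
    have hfinal : ∑' i, F i ≤ Cup * lambda^(-β) := by
      rw [hsplit]
      have h1 : (N:ℝ) ≤ c₂^β * lambda^(-β) + 1 := by rw [← hc2split]; exact hNy
      have h2 : ∑' i, F (i + N) ≤ (1/(1/β-1)) * (c₂^β * lambda^(-β)) := by
        rw [← hc2split]; exact htail2
      have hgoal : Cup * lambda^(-β) = c₂^β*lambda^(-β) + lambda^(-β)
          + (1/(1/β-1))*(c₂^β*lambda^(-β)) := by rw [hCup_def]; ring
      rw [hgoal]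
      linarith [hhead, h1, h2, hlamneg]
    calc ∑' i, F i ≤ Cup * lambda^(-β) := hfinal
      _ ≤ max (min A B) Cup * lambda^(-β) :=
        mul_le_mul_of_nonneg_right (le_max_right _ _) hlamnegpos.le
end

section
/- Let ξ_1, …, ξ_n be i.i.d. real random variables with |ξ_i| ≤ B almost surely, E[ξ_i] = μ, and E[(ξ_i − μ)²] ≤ σ². Then for every α > 0 and every ε > 0, P{ (1/n)·Σ_{i=1}^n ξ_i − μ ≥ α σ² + ε } ≤ exp( − 6nαε/(3 + 4αB) ). -/
open MeasureTheory ProbabilityTheory Nat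

private lemma fact_ge_aux : ∀ k : ℕ, 2 * 3 ^ k ≤ (k + 2)!
  | 0 => by norm_num
  | (k+1) => by
    have ih := fact_ge_aux k
    have : (k + 3)! = (k + 3) * (k + 2)! := rfl
    calc 2 * 3 ^ (k+1) = 3 * (2 * 3 ^ k) := by ring
    _ ≤ 3 * (k + 2)! := by omega
    _ ≤ (k + 3) * (k + 2)! := by
        have : (3:ℕ) ≤ k + 3 := by omega
        exact Nat.mul_le_mul_right _ this
    _ = (k + 3)! := rfl

set_option maxHeartbeats 1000000 in
private lemma exp_le_quad {y d : ℝ} (hy : |y| ≤ d) (hd : d < 3) :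
    Real.exp y ≤ 1 + y + y ^ 2 / 2 * (1 - d / 3)⁻¹ := by
  have hd0 : 0 ≤ d := (abs_nonneg y).trans hy
  have hsum := Real.summable_pow_div_factorial y
  have hsum1 : Summable (fun n : ℕ => y ^ (n + 1) / (n + 1)!) :=
    (summable_nat_add_iff 1).mpr hsum
  have hsum2 : Summable (fun n : ℕ => y ^ (n + 2) / (n + 2)!) :=
    (summable_nat_add_iff 2).mpr hsum
  have hgeo : Summable (fun k : ℕ => y ^ 2 / 2 * (d / 3) ^ k) :=
    (summable_geometric_of_lt_one (by positivity) (by linarith)).mul_left _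
  have hexp : Real.exp y = ∑' n : ℕ, y ^ n / n ! := by
    rw [Real.exp_eq_exp_ℝ, NormedSpace.exp_eq_tsum_div]
  rw [hexp, Summable.tsum_eq_zero_add hsum, Summable.tsum_eq_zero_add hsum1]
  have h0 : y ^ 0 / (0:ℕ)! = 1 := by norm_num
  have h1 : y ^ (0 + 1) / (0 + 1)! = y := by norm_num
  rw [h0, h1]
  have hterm : ∀ k : ℕ, y ^ (k + 1 + 1) / (k + 1 + 1)! ≤ y ^ 2 / 2 * (d / 3) ^ k := by
    intro k
    have h2 : y ^ (k + 1 + 1) ≤ y ^ 2 * d ^ k := by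
      calc y ^ (k + 2) ≤ |y ^ (k + 2)| := le_abs_self _
      _ = |y| ^ (k + 2) := abs_pow y _
      _ = |y| ^ 2 * |y| ^ k := by ring
      _ ≤ |y| ^ 2 * d ^ k := by gcongr
      _ = y ^ 2 * d ^ k := by rw [sq_abs]
    have h3 : (2 * 3 ^ k : ℝ) ≤ (k + 1 + 1)! := by
      exact_mod_cast fact_ge_aux k
    calc y ^ (k + 1 + 1) / (k + 1 + 1)! ≤ (y ^ 2 * d ^ k) / (2 * 3 ^ k) := by
          apply div_le_div₀ (by positivity) h2 (by positivity) h3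
    _ = y ^ 2 / 2 * (d / 3) ^ k := by
        rw [div_pow]; ring
  have := Summable.tsum_le_tsum hterm hsum2 hgeo
  calc 1 + (y + ∑' k : ℕ, y ^ (k + 1 + 1) / (k + 1 + 1)!)
      ≤ 1 + (y + ∑' k : ℕ, y ^ 2 / 2 * (d / 3) ^ k) := by linarith
  _ = 1 + y + y ^ 2 / 2 * (1 - d / 3)⁻¹ := by
      rw [tsum_mul_left, tsum_geometric_of_lt_one (by positivity) (by linarith)]
      ring

set_option maxHeartbeats 1000000 in
/-- one-sided exponential tail bound: for i.i.d. bounded real random variables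
`ξ_1,…,ξ_n` with `|ξ_i| ≤ B` a.s., mean `μ` and variance at most `σ²`, for all `α, ε > 0`,
`P{(1/n)∑ ξ_i - μ ≥ ασ² + ε} ≤ exp(-6nαε/(3+4αB))`. -/
theorem stmt3 {Ω : Type*} [MeasurableSpace Ω] (P : Measure Ω) [IsProbabilityMeasure P]
    (n : ℕ) (hn : 0 < n) (ξ : Fin n → Ω → ℝ)
    (hmeas : ∀ i, Measurable (ξ i))
    (hindep : iIndepFun ξ P)
    (hident : ∀ i j, P.map (ξ i) = P.map (ξ j))
    (B mu sigma : ℝ) (hB : 0 < B)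
    (hbound : ∀ i, ∀ᵐ ω ∂P, |ξ i ω| ≤ B)
    (hmean : ∀ i, ∫ ω, ξ i ω ∂P = mu)
    (hvar : ∀ i, ∫ ω, (ξ i ω - mu) ^ 2 ∂P ≤ sigma ^ 2)
    (α ε : ℝ) (hα : 0 < α) (hε : 0 < ε) :
    P {ω | α * sigma ^ 2 + ε ≤ (1 / n : ℝ) * ∑ i, ξ i ω - mu} ≤
      ENNReal.ofReal (Real.exp (-(6 * n * α * ε) / (3 + 4 * α * B))) := by
  have hn' : (0:ℝ) < n := by exact_mod_cast hn
  have hden : (0:ℝ) < 3 + 4 * α * B := by positivity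
  set t : ℝ := 6 * α / (3 + 4 * α * B) with ht_def
  have ht : 0 < t := by positivity
  set d : ℝ := 2 * B * t with hd_def
  have hd0 : 0 < d := by positivity
  have hd3 : d < 3 := by
    have hdeq : d = 12 * α * B / (3 + 4 * α * B) := by
      rw [hd_def, ht_def]; ring
    rw [hdeq, div_lt_iff₀ hden]; nlinarith
  have h13 : (0:ℝ) < 1 - d / 3 := by linarith
  have hT : t * (3 + 4 * α * B) = 6 * α := by
    rw [ht_def]; field_simp
  have hkey : t ^ 2 / 2 * (1 - d / 3)⁻¹ = α * t := by
    rw [mul_comm, inv_mul_eq_div, div_eq_iff h13.ne', hd_def]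
    linear_combination (t / 6) * hT
  -- |mu| ≤ B
  have hmu_abs : |mu| ≤ B := by
    have i0 : Fin n := ⟨0, hn⟩
    rw [← hmean i0, ← Real.norm_eq_abs]
    have := norm_integral_le_of_norm_le_const (μ := P) (f := ξ i0) (C := B)
      ((hbound i0).mono fun ω h => by rwa [Real.norm_eq_abs])
    simpa using this
  have hcent : ∀ i, ∀ᵐ ω ∂P, |ξ i ω - mu| ≤ 2 * B := by
    intro i
    filter_upwards [hbound i] with ω h
    rcases abs_le.mp h with ⟨h1, h2⟩
    rcases abs_le.mp hmu_abs with ⟨h3, h4⟩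
    rw [abs_le]; constructor <;> linarith
  -- integrability
  have hintXi : ∀ i, Integrable (ξ i) P := fun i =>
    Integrable.mono' (integrable_const B) (hmeas i).aestronglyMeasurable
      ((hbound i).mono fun ω h => by rwa [Real.norm_eq_abs])
  have hintX : ∀ i, Integrable (fun ω => ξ i ω - mu) P := fun i =>
    (hintXi i).sub (integrable_const mu)
  have hintX2 : ∀ i, Integrable (fun ω => (ξ i ω - mu) ^ 2) P := fun i =>
    Integrable.mono' (integrable_const ((2*B) ^ 2))
      (((hmeas i).sub measurable_const).pow_const 2).aestronglyMeasurable
      ((hcent i).mono fun ω h => by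
        rw [Real.norm_eq_abs, abs_pow]
        exact pow_le_pow_left₀ (abs_nonneg _) h 2)
  have habs_y : ∀ i, ∀ᵐ ω ∂P, |t * (ξ i ω - mu)| ≤ d := by
    intro i
    filter_upwards [hcent i] with ω h
    rw [abs_mul, abs_of_pos ht, hd_def]
    calc t * |ξ i ω - mu| ≤ t * (2 * B) := by gcongr
    _ = 2 * B * t := by ring
  have hintexp : ∀ i, Integrable (fun ω => Real.exp (t * (ξ i ω - mu))) P := by
    intro i
    refine Integrable.mono' (integrable_const (Real.exp d))
      (((hmeas i).sub measurable_const).const_mul t).exp.aestronglyMeasurable ?_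
    filter_upwards [habs_y i] with ω h
    rw [Real.norm_eq_abs, Real.abs_exp, Real.exp_le_exp]
    exact (le_abs_self _).trans h
  have hintexpX : ∀ i, Integrable (fun ω => Real.exp (t * ξ i ω)) P := by
    intro i
    have : (fun ω => Real.exp (t * ξ i ω))
        = fun ω => Real.exp (t * mu) * Real.exp (t * (ξ i ω - mu)) := by
      funext ω; rw [← Real.exp_add]; ring_nf
    rw [this]
    exact (hintexp i).const_mul _
  -- per-variable mgf bound
  have hmgf : ∀ i, mgf (ξ i) P t ≤ Real.exp (t * mu + α * sigma ^ 2 * t) := by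
    intro i
    have hEX : ∫ ω, (ξ i ω - mu) ∂P = 0 := by
      rw [integral_sub (hintXi i) (integrable_const mu), hmean i, integral_const]
      simp
    have hmono : ∫ ω, Real.exp (t * (ξ i ω - mu)) ∂P
        ≤ ∫ ω, (1 + t * (ξ i ω - mu) + (α * t) * (ξ i ω - mu) ^ 2) ∂P := by
      refine integral_mono_ae (hintexp i)
        (((integrable_const 1).add ((hintX i).const_mul t)).add
          ((hintX2 i).const_mul (α * t))) ?_
      filter_upwards [habs_y i] with ω h
      have h2 := exp_le_quad h hd3
      have h3 : (t * (ξ i ω - mu)) ^ 2 / 2 * (1 - d / 3)⁻¹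
          = (α * t) * (ξ i ω - mu) ^ 2 := by
        rw [mul_pow, ← hkey]; ring
      rw [h3] at h2
      exact h2
    have hsplit : ∫ ω, (1 + t * (ξ i ω - mu) + (α * t) * (ξ i ω - mu) ^ 2) ∂P
        = 1 + t * (∫ ω, (ξ i ω - mu) ∂P) + (α * t) * ∫ ω, (ξ i ω - mu) ^ 2 ∂P := by
      rw [integral_add (f := fun ω => 1 + t * (ξ i ω - mu))
          (g := fun ω => (α * t) * (ξ i ω - mu) ^ 2)
          ((integrable_const 1).add ((hintX i).const_mul t))
          ((hintX2 i).const_mul (α * t)),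
        integral_add (f := fun _ => (1:ℝ)) (g := fun ω => t * (ξ i ω - mu))
          (integrable_const 1) ((hintX i).const_mul t),
        integral_const, integral_const_mul, integral_const_mul]
      simp
    have hstep : ∫ ω, Real.exp (t * (ξ i ω - mu)) ∂P ≤ 1 + α * sigma ^ 2 * t := by
      rw [hsplit, hEX] at hmono
      have h4 : (α * t) * ∫ ω, (ξ i ω - mu) ^ 2 ∂P ≤ (α * t) * sigma ^ 2 :=
        mul_le_mul_of_nonneg_left (hvar i) (by positivity)
      nlinarith
    have hstep2 : ∫ ω, Real.exp (t * (ξ i ω - mu)) ∂P ≤ Real.exp (α * sigma ^ 2 * t) := by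
      have := Real.add_one_le_exp (α * sigma ^ 2 * t)
      linarith
    have hmgf_eq : mgf (ξ i) P t
        = Real.exp (t * mu) * ∫ ω, Real.exp (t * (ξ i ω - mu)) ∂P := by
      rw [mgf, ← integral_const_mul]
      congr 1; funext ω; rw [← Real.exp_add]; ring_nf
    rw [hmgf_eq, Real.exp_add]
    exact mul_le_mul_of_nonneg_left hstep2 (Real.exp_nonneg _)
  -- event rewriting
  have hset : {ω | α * sigma ^ 2 + ε ≤ (1 / n : ℝ) * ∑ i, ξ i ω - mu}
      = {ω | (α * sigma ^ 2 + ε + mu) * n ≤ (∑ i, ξ i) ω} := by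
    ext ω
    simp only [Set.mem_setOf_eq, Finset.sum_apply]
    rw [le_sub_iff_add_le, one_div, inv_mul_eq_div, le_div_iff₀ hn']
  -- Chernoff
  have hint_sum : Integrable (fun ω => Real.exp (t * (∑ i, ξ i) ω)) P :=
    hindep.integrable_exp_mul_sum hmeas (fun i _ => hintexpX i)
  have hcher := measure_ge_le_exp_mul_mgf (μ := P) (X := ∑ i, ξ i)
    ((α * sigma ^ 2 + ε + mu) * n) ht.le hint_sum
  have hprod : mgf (∑ i, ξ i) P t = ∏ i, mgf (ξ i) P t := hindep.mgf_sum hmeas Finset.univ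
  have hprodle : mgf (∑ i, ξ i) P t ≤ Real.exp (t * mu + α * sigma ^ 2 * t) ^ n := by
    rw [hprod]
    calc ∏ i, mgf (ξ i) P t ≤ ∏ _i : Fin n, Real.exp (t * mu + α * sigma ^ 2 * t) :=
      Finset.prod_le_prod (fun i _ => mgf_nonneg) (fun i _ => hmgf i)
    _ = Real.exp (t * mu + α * sigma ^ 2 * t) ^ n := by
      rw [Finset.prod_const, Finset.card_univ, Fintype.card_fin]
  rw [hset, ENNReal.le_ofReal_iff_toReal_le (measure_ne_top _ _) (Real.exp_nonneg _)]
  calc (P {ω | (α * sigma ^ 2 + ε + mu) * n ≤ (∑ i, ξ i) ω}).toReal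
      ≤ Real.exp (-t * ((α * sigma ^ 2 + ε + mu) * n)) * mgf (∑ i, ξ i) P t := hcher
  _ ≤ Real.exp (-t * ((α * sigma ^ 2 + ε + mu) * n))
      * Real.exp (t * mu + α * sigma ^ 2 * t) ^ n :=
      mul_le_mul_of_nonneg_left hprodle (Real.exp_nonneg _)
  _ = Real.exp (-(6 * n * α * ε) / (3 + 4 * α * B)) := by
      rw [← Real.exp_nat_mul, ← Real.exp_add]
      congr 1
      rw [ht_def]
      field_simp
      ring
end

section
/- Let (X, 𝒜, μ) be a probability space, let f : X → ℝ be measurable with |f(x)| ≤ M for all x, and let x_1, …, x_n be i.i.d. samples from μ. Write ‖f‖_{L²}² = ∫_X f² dμ and ‖f‖_{L²,n}² = (1/n)·Σ_{i=1}^n f(x_i)². Then for every α > 0 and δ ∈ (0,1), with probability at least 1 − δ, |‖f‖_{L²,n}² − ‖f‖_{L²}²| ≤ α M² ‖f‖_{L²}² + ((3 + 4αM²)/(6αn))·ln(2/δ). In particular, taking α = 1/(2M²), with probability at least 1 − δ one has (1/2)‖f‖_{L²}² − (5M²/(3n))·ln(2/δ) ≤ ‖f‖_{L²,n}² ≤ (3/2)‖f‖_{L²}²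 + (5M²/(3n))·ln(2/δ). -/
open MeasureTheory Nat

lemma fact_ge (k : ℕ) : 2 * 3 ^ k ≤ (k + 2)! := by
  induction k with
  | zero => simp [Nat.factorial]
  | succ k ih =>
    have : (k + 3)! = (k + 3) * (k + 2)! := rfl
    calc 2 * 3 ^ (k+1) = 3 * (2 * 3 ^ k) := by ring
    _ ≤ 3 * (k+2)! := by omega
    _ ≤ (k + 3) * (k + 2)! := by
        have : 3 ≤ k + 3 := by omega
        exact Nat.mul_le_mul_right _ this
    _ = (k + 1 + 2)! := rfl

lemma exp_le_quad_neg {x : ℝ} (hx : x ≤ 0) : Real.exp x ≤ 1 + x + x ^ 2 / 2 := by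
  have hA : Antitone (fun x : ℝ => 1 + x + x ^ 2 / 2 - Real.exp x) := by
    apply antitone_of_deriv_nonpos
    · fun_prop
    · intro y
      have H : HasDerivAt (fun x : ℝ => 1 + x + x ^ 2 / 2 - Real.exp x)
          (1 + y - Real.exp y) y := by
        have h1 : HasDerivAt (fun x : ℝ => 1 + x + x ^ 2 / 2 - Real.exp x)
            ((0 + 1 + (2 * y ^ 1) / 2) - Real.exp y) y := by
          exact (((hasDerivAt_const y (1:ℝ)).add (hasDerivAt_id y)).add
            ((hasDerivAt_pow 2 y).div_const 2)).sub (Real.hasDerivAt_exp y)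
        convert h1 using 1; ring
      rw [H.deriv]
      linarith [Real.add_one_le_exp y]
  have := hA hx
  simpa using this

lemma exp_le_quad_s4 {u x : ℝ} (hu : 0 ≤ u) (hu3 : u < 3) (hx : x ≤ u) :
    Real.exp x ≤ 1 + x + x ^ 2 * (3 / (2 * (3 - u))) := by
  have hK : (1:ℝ) / 2 ≤ 3 / (2 * (3 - u)) := by
    rw [div_le_div_iff₀ (by norm_num) (by linarith)]
    nlinarith
  rcases le_or_gt x 0 with hx0 | hx0
  · have := exp_le_quad_neg hx0
    nlinarith [sq_nonneg x]
  · -- 0 < x ≤ u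
    have hxu : 0 < u := lt_of_lt_of_le hx0 hx
    have hexp : Real.exp x = ∑' k : ℕ, x ^ k / k ! := by
      rw [Real.exp_eq_exp_ℝ, NormedSpace.exp_eq_tsum_div]
    have hs : Summable (fun k : ℕ => x ^ k / k !) := Real.summable_pow_div_factorial x
    have hsplit : (∑ i ∈ Finset.range 2, x ^ i / (i)!) + ∑' k : ℕ, x ^ (k + 2) / (k + 2)! =
        ∑' k : ℕ, x ^ k / k ! := Summable.sum_add_tsum_nat_add 2 hs
    have hr1 : (0:ℝ) ≤ u / 3 := by positivity
    have hr2 : u / 3 < 1 := by linarith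
    have hgs : Summable (fun k : ℕ => x ^ 2 / 2 * (u / 3) ^ k) :=
      (summable_geometric_of_lt_one hr1 hr2).mul_left _
    have htail : ∑' k : ℕ, x ^ (k + 2) / (k + 2)! ≤ x ^ 2 * (3 / (2 * (3 - u))) := by
      have hle : ∀ k : ℕ, x ^ (k + 2) / (k + 2)! ≤ x ^ 2 / 2 * (u / 3) ^ k := by
        intro k
        have h1 : x ^ (k + 2) ≤ x ^ 2 * u ^ k := by
          have : x ^ (k+2) = x ^ 2 * x ^ k := by ring
          rw [this]
          gcongr
          all_goals first | exact hx0.le | skip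
        have h2 : (2 * 3 ^ k : ℝ) ≤ ((k + 2)! : ℝ) := by
          exact_mod_cast fact_ge k
        have h3 : (0:ℝ) < (k + 2)! := by positivity
        rw [div_le_iff₀ h3]
        calc x ^ (k + 2) ≤ x ^ 2 * u ^ k := h1
        _ = (x ^ 2 / 2 * (u / 3) ^ k) * (2 * 3 ^ k) := by
            field_simp
            rw [← mul_pow, div_mul_cancel₀ u (by norm_num : (3:ℝ) ≠ 0)]
        _ ≤ (x ^ 2 / 2 * (u / 3) ^ k) * (k + 2)! := by
            have hnn : (0:ℝ) ≤ x ^ 2 / 2 * (u / 3) ^ k := by positivity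
            exact mul_le_mul_of_nonneg_left h2 hnn
      have hsum : Summable (fun k : ℕ => x ^ (k + 2) / (k + 2)!) :=
        (summable_nat_add_iff 2).2 hs
      calc ∑' k : ℕ, x ^ (k + 2) / (k + 2)! ≤ ∑' k : ℕ, x ^ 2 / 2 * (u / 3) ^ k :=
            hsum.tsum_le_tsum hle hgs
      _ = x ^ 2 / 2 * (1 - u / 3)⁻¹ := by
            rw [tsum_mul_left, tsum_geometric_of_lt_one hr1 hr2]
      _ = x ^ 2 * (3 / (2 * (3 - u))) := by
            field_simp
            try ring
    have hhead : (∑ i ∈ Finset.range 2, x ^ i / (i)!) = 1 + x := by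
      simp [Finset.sum_range_succ, Nat.factorial]
    rw [hexp, ← hsplit, hhead]
    linarith

lemma mgf_bound {X : Type*} [MeasurableSpace X] (μ : Measure X) [IsProbabilityMeasure μ]
    (Z : X → ℝ) (hZ : Measurable Z) (b v s : ℝ) (hs : 0 ≤ s) (hb : 0 ≤ b) (hsb : s * b < 3)
    (hZb : ∀ x, Z x ≤ b) (hZi : Integrable Z μ) (hZ2i : Integrable (fun x => (Z x) ^ 2) μ)
    (hmean : ∫ x, Z x ∂μ = 0) (hvar : ∫ x, (Z x) ^ 2 ∂μ ≤ v) :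
    ∫ x, Real.exp (s * Z x) ∂μ ≤ Real.exp (s ^ 2 * v * (3 / (2 * (3 - s * b)))) := by
  set K := 3 / (2 * (3 - s * b)) with hKdef
  have hsb3 : 0 < 3 - s * b := by linarith
  have hK0 : 0 ≤ K := by positivity
  have hsbnn : 0 ≤ s * b := mul_nonneg hs hb
  have hpt : ∀ x, Real.exp (s * Z x) ≤ 1 + s * Z x + s ^ 2 * K * (Z x) ^ 2 := by
    intro x
    have h1 : s * Z x ≤ s * b := mul_le_mul_of_nonneg_left (hZb x) hs
    have := exp_le_quad_s4 hsbnn hsb h1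
    calc Real.exp (s * Z x) ≤ 1 + s * Z x + (s * Z x) ^ 2 * K := this
    _ = 1 + s * Z x + s ^ 2 * K * (Z x) ^ 2 := by ring
  have hint : Integrable (fun x => 1 + s * Z x + s ^ 2 * K * (Z x) ^ 2) μ :=
    ((integrable_const 1).add (hZi.const_mul s)).add (hZ2i.const_mul _)
  have hexpint : Integrable (fun x => Real.exp (s * Z x)) μ := by
    refine (integrable_const (Real.exp (s * b))).mono' ?_ ?_
    · exact (Real.measurable_exp.comp (hZ.const_mul s)).aestronglyMeasurable
    · refine Filter.Eventually.of_forall fun x => ?_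
      rw [Real.norm_eq_abs, abs_of_pos (Real.exp_pos _)]
      exact Real.exp_le_exp.2 (mul_le_mul_of_nonneg_left (hZb x) hs)
  calc ∫ x, Real.exp (s * Z x) ∂μ ≤ ∫ x, (1 + s * Z x + s ^ 2 * K * (Z x) ^ 2) ∂μ :=
        integral_mono hexpint hint hpt
  _ = 1 + s * (∫ x, Z x ∂μ) + s ^ 2 * K * (∫ x, (Z x) ^ 2 ∂μ) := by
      have e1 : ∫ x, (1 + s * Z x + s ^ 2 * K * (Z x) ^ 2) ∂μ
          = (∫ x, (1 + s * Z x) ∂μ) + ∫ x, s ^ 2 * K * (Z x) ^ 2 ∂μ :=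
        integral_add ((integrable_const 1).add (hZi.const_mul s)) (hZ2i.const_mul _)
      have e2 : (∫ x, (1 + s * Z x) ∂μ) = (∫ _x, (1:ℝ) ∂μ) + ∫ x, s * Z x ∂μ :=
        integral_add (integrable_const 1) (hZi.const_mul s)
      rw [e1, e2, integral_const_mul, integral_const_mul, integral_const]
      simp
  _ = 1 + s ^ 2 * K * (∫ x, (Z x) ^ 2 ∂μ) := by rw [hmean]; ring
  _ ≤ 1 + s ^ 2 * K * v := by
      have : s ^ 2 * K * (∫ x, (Z x) ^ 2 ∂μ) ≤ s ^ 2 * K * v :=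
        mul_le_mul_of_nonneg_left hvar (by positivity)
      linarith
  _ ≤ Real.exp (s ^ 2 * v * K) := by
      have := Real.add_one_le_exp (s ^ 2 * v * K)
      have h : s ^ 2 * K * v = s ^ 2 * v * K := by ring
      linarith [h ▸ this]

lemma bernstein_tail {X : Type*} [MeasurableSpace X] (μ : Measure X) [IsProbabilityMeasure μ]
    (Z : X → ℝ) (hZ : Measurable Z) (b : ℝ) (hb : 0 < b)
    (hZb : ∀ x, Z x ≤ b) (hZlb : ∀ x, -b ≤ Z x)
    (hmean : ∫ x, Z x ∂μ = 0) (v : ℝ) (hv : 0 ≤ v) (hvar : ∫ x, (Z x) ^ 2 ∂μ ≤ v)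
    (n : ℕ) (hn : 0 < n) (L : ℝ) (hL : 0 < L) (t : ℝ)
    (ht : Real.sqrt (2 * v * L / n) + 2 * b * L / (3 * n) ≤ t) :
    Measure.pi (fun _ : Fin n => μ) {x | (n : ℝ) * t ≤ ∑ i, Z (x i)} ≤
      ENNReal.ofReal (Real.exp (-L)) := by
  have hn' : (0:ℝ) < n := by exact_mod_cast hn
  have ht0 : 0 < t := by
    have h1 : 0 < 2 * b * L / (3 * n) := by positivity
    have h2 : 0 ≤ Real.sqrt (2 * v * L / n) := Real.sqrt_nonneg _
    linarith
  have hZ2i : Integrable (fun x => (Z x) ^ 2) μ := by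
    refine (integrable_const (b ^ 2)).mono' ((hZ.pow_const 2).aestronglyMeasurable) ?_
    refine Filter.Eventually.of_forall fun x => ?_
    rw [Real.norm_eq_abs, abs_of_nonneg (sq_nonneg _)]
    have hab := abs_le.2 ⟨hZlb x, hZb x⟩
    calc (Z x) ^ 2 = |Z x| ^ 2 := (sq_abs _).symm
    _ ≤ b ^ 2 := by gcongr <;> exact abs_nonneg _
  rcases eq_or_lt_of_le hv with hv0 | hvpos
  · -- v = 0 : Z = 0 a.e.
    have hZ2nn : 0 ≤ᵐ[μ] fun x => (Z x) ^ 2 := Filter.Eventually.of_forall fun x => sq_nonneg _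
    have hint0 : ∫ x, (Z x) ^ 2 ∂μ = 0 :=
      le_antisymm (hvar.trans hv0.ge) (integral_nonneg fun x => sq_nonneg _)
    have hae : (fun x => (Z x) ^ 2) =ᵐ[μ] 0 :=
      (integral_eq_zero_iff_of_nonneg_ae hZ2nn hZ2i).1 hint0
    have haeZ : μ {x | Z x ≠ 0} = 0 := by
      have h : ∀ᵐ x ∂μ, Z x = 0 := by
        filter_upwards [hae] with x hx
        exact pow_eq_zero_iff (by norm_num : (2:ℕ) ≠ 0) |>.1 hx
      simpa [ae_iff] using h
    have hsub : {x : Fin n → X | (n : ℝ) * t ≤ ∑ i, Z (x i)} ⊆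
        ⋃ i : Fin n, Function.eval i ⁻¹' {y | Z y ≠ 0} := by
      intro x hx
      by_contra hmem
      simp only [Set.mem_iUnion, not_exists, Set.mem_preimage, Set.mem_setOf_eq, not_not] at hmem
      have hz : ∑ i, Z (x i) = 0 := Finset.sum_eq_zero fun i _ => hmem i
      rw [Set.mem_setOf_eq, hz] at hx
      nlinarith
    refine le_trans (measure_mono hsub) ?_
    have h0 : Measure.pi (fun _ : Fin n => μ)
        (⋃ i : Fin n, Function.eval i ⁻¹' {y | Z y ≠ 0}) = 0 :=
      measure_iUnion_null fun i => Measure.pi_eval_preimage_null _ haeZ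
    rw [h0]
    exact _root_.zero_le
  · -- v > 0
    obtain ⟨D, hD⟩ : ∃ D : ℝ, D = v + b * t / 3 := ⟨_, rfl⟩
    have hD0 : 0 < D := by rw [hD]; positivity
    have h3D : 3 * D = 3 * v + b * t := by rw [hD]; ring
    obtain ⟨s, hs⟩ : ∃ s : ℝ, s = t / D := ⟨_, rfl⟩
    have hs0 : 0 < s := by rw [hs]; positivity
    have hsb : s * b < 3 := by
      rw [hs, div_mul_eq_mul_div, div_lt_iff₀ hD0]
      nlinarith
    have hZi : Integrable Z μ := by
      refine (integrable_const b).mono' hZ.aestronglyMeasurable ?_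
      exact Filter.Eventually.of_forall fun x => by
        rw [Real.norm_eq_abs]; exact abs_le.2 ⟨hZlb x, hZb x⟩
    have hmgf : ∫ x, Real.exp (s * Z x) ∂μ ≤ Real.exp (s ^ 2 * v * (3 / (2 * (3 - s * b)))) :=
      mgf_bound μ Z hZ b v s hs0.le hb.le hsb hZb hZi hZ2i hmean hvar
    have hsb3 : 3 - s * b = 3 * v / D := by
      rw [hs, eq_div_iff hD0.ne']
      field_simp
      linarith [h3D]
    have hexp_eq : -(s * ((n : ℝ) * t)) + (n : ℝ) * (s ^ 2 * v * (3 / (2 * (3 - s * b))))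
        = -((n : ℝ) * t ^ 2 / (2 * D)) := by
      rw [hsb3, hs]
      field_simp
      ring
    have hkey : 2 * L * D ≤ (n : ℝ) * t ^ 2 := by
      obtain ⟨r, hr⟩ : ∃ r : ℝ, r = Real.sqrt (2 * v * L / n) := ⟨_, rfl⟩
      rw [← hr] at ht
      have hr0 : 0 ≤ r := hr ▸ Real.sqrt_nonneg _
      have hr2 : r ^ 2 = 2 * v * L / n := by rw [hr]; exact Real.sq_sqrt (by positivity)
      have hrt : r ≤ t := le_trans (le_add_of_nonneg_right (by positivity)) ht
      have hrr : (n : ℝ) * r ^ 2 = 2 * v * L := by rw [hr2]; field_simp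
      have s2 : 2 * v * L ≤ (n:ℝ) * r * t := by
        have h := mul_le_mul_of_nonneg_left (mul_le_mul_of_nonneg_left hrt hr0) hn'.le
        linarith [h, hrr]
      have hc : (n:ℝ) * (2 * b * L / (3 * n)) = 2 * b * L / 3 := by field_simp
      have s1 : (n:ℝ) * r * t + (2 * b * L / 3) * t ≤ (n:ℝ) * t ^ 2 := by
        have h := mul_le_mul_of_nonneg_left (mul_le_mul_of_nonneg_right ht ht0.le) hn'.le
        have hct : ((n:ℝ) * (2 * b * L / (3 * n))) * t = (2 * b * L / 3) * t := by rw [hc]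
        have hexpand : (n:ℝ) * ((r + 2 * b * L / (3 * n)) * t)
            = (n:ℝ) * r * t + ((n:ℝ) * (2 * b * L / (3 * n))) * t := by ring
        linarith [h, hct, hexpand]
      have h2D : 2 * L * D = 2 * L * v + (2 * b * L / 3) * t := by rw [hD]; ring
      linarith [s1, s2, h2D]
    have hexp_le : -(s * ((n : ℝ) * t)) + (n : ℝ) * (s ^ 2 * v * (3 / (2 * (3 - s * b)))) ≤ -L := by
      rw [hexp_eq, neg_le_neg_iff, le_div_iff₀ (by positivity)]
      linarith
    letI : MeasureSpace X := ⟨μ⟩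
    have hμ : (volume : Measure X) = μ := rfl
    have hprob : IsProbabilityMeasure (Measure.pi (fun _ : Fin n => μ)) := by infer_instance
    set ν : Measure (Fin n → X) := Measure.pi (fun _ : Fin n => μ) with hν
    set W : (Fin n → X) → ℝ := fun x => ∑ i, Z (x i) with hW
    have hWm : Measurable W := by
      apply Finset.measurable_sum
      intro i _
      exact hZ.comp (measurable_pi_apply i)
    have hWb : ∀ x, W x ≤ (n : ℝ) * b := by
      intro x
      calc W x ≤ ∑ _i : Fin n, b := Finset.sum_le_sum fun i _ => hZb (x i)
      _ = (n : ℝ) * b := by simp [mul_comm]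
    have hWint : Integrable (fun x => Real.exp (s * W x)) ν := by
      refine (integrable_const (Real.exp (s * ((n:ℝ) * b)))).mono'
        ((Real.measurable_exp.comp (hWm.const_mul s)).aestronglyMeasurable) ?_
      refine Filter.Eventually.of_forall fun x => ?_
      rw [Real.norm_eq_abs, abs_of_pos (Real.exp_pos _)]
      exact Real.exp_le_exp.2 (mul_le_mul_of_nonneg_left (hWb x) hs0.le)
    have hchern := ProbabilityTheory.measure_ge_le_exp_mul_mgf (X := W) (μ := ν)
      ((n : ℝ) * t) hs0.le hWint
    have hprod : ProbabilityTheory.mgf W ν s = (∫ x, Real.exp (s * Z x) ∂μ) ^ n := by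
      rw [ProbabilityTheory.mgf]
      have hptw : ∀ x : Fin n → X, Real.exp (s * W x) = ∏ i : Fin n, Real.exp (s * Z (x i)) := by
        intro x
        rw [hW, Finset.mul_sum, Real.exp_sum]
      calc (∫ x, Real.exp (s * W x) ∂ν)
          = ∫ x : Fin n → X, ∏ i : Fin n, Real.exp (s * Z (x i)) := by
            rw [hν, ← hμ, ← volume_pi]
            exact integral_congr_ae (Filter.Eventually.of_forall hptw)
      _ = (∫ x, Real.exp (s * Z x)) ^ (Fintype.card (Fin n)) :=
            integral_fintype_prod_eq_pow (ι := Fin n) (fun y => Real.exp (s * Z y))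
      _ = (∫ x, Real.exp (s * Z x) ∂μ) ^ n := by rw [Fintype.card_fin, hμ]
    have hI0 : 0 ≤ ∫ x, Real.exp (s * Z x) ∂μ := integral_nonneg fun x => (Real.exp_pos _).le
    have hfinal : (ν {x | (n : ℝ) * t ≤ W x}).toReal ≤ Real.exp (-L) := by
      calc (ν {x | (n : ℝ) * t ≤ W x}).toReal
          ≤ Real.exp (-s * ((n:ℝ) * t)) * ProbabilityTheory.mgf W ν s := hchern
      _ ≤ Real.exp (-s * ((n:ℝ) * t)) * Real.exp (s ^ 2 * v * (3 / (2 * (3 - s * b)))) ^ n := by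
          rw [hprod]
          exact mul_le_mul_of_nonneg_left (pow_le_pow_left₀ hI0 hmgf n) (Real.exp_pos _).le
      _ = Real.exp (-(s * ((n:ℝ) * t)) + (n:ℝ) * (s ^ 2 * v * (3 / (2 * (3 - s * b))))) := by
          rw [← Real.exp_nat_mul, ← Real.exp_add]
          ring_nf
      _ ≤ Real.exp (-L) := Real.exp_le_exp.2 hexp_le
    have hne : ν {x | (n : ℝ) * t ≤ W x} ≠ ⊤ := measure_ne_top _ _
    calc ν {x | (n : ℝ) * t ≤ W x} = ENNReal.ofReal ((ν {x | (n : ℝ) * t ≤ W x}).toReal) :=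
          (ENNReal.ofReal_toReal hne).symm
    _ ≤ ENNReal.ofReal (Real.exp (-L)) := ENNReal.ofReal_le_ofReal hfinal

/-- empirical vs population squared `L²`-norm. For a measurable `f` with
`|f| ≤ M` and i.i.d. samples `x_1,…,x_n ∼ μ` (modeled by the product measure on `Fin n → X`),
with probability at least `1-δ`:
`|‖f‖²_{L²,n} - ‖f‖²_{L²}| ≤ αM²‖f‖²_{L²} + ((3+4αM²)/(6αn)) log(2/δ)`, and in particular
(taking `α = 1/(2M²)`) the two-sided bound
`(1/2)‖f‖²_{L²} - (5M²/(3n))log(2/δ) ≤ ‖f‖²_{L²,n} ≤ (3/2)‖f‖²_{L²} + (5M²/(3n))log(2/δ)`. -/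
theorem stmt4 {X : Type*} [MeasurableSpace X] (μ : Measure X) [IsProbabilityMeasure μ]
    (f : X → ℝ) (hf : Measurable f) (M : ℝ) (hM : 0 < M)
    (hbound : ∀ x, |f x| ≤ M)
    (n : ℕ) (hn : 0 < n) (δ : ℝ) (hδ : δ ∈ Set.Ioo (0:ℝ) 1) :
    (∀ α : ℝ, 0 < α →
      ENNReal.ofReal (1 - δ) ≤
        Measure.pi (fun _ : Fin n => μ)
          {x | |(1 / n : ℝ) * ∑ i, (f (x i)) ^ 2 - ∫ t, (f t) ^ 2 ∂μ| ≤
            α * M ^ 2 * (∫ t, (f t) ^ 2 ∂μ) +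
              (3 + 4 * α * M ^ 2) / (6 * α * n) * Real.log (2 / δ)}) ∧
    ENNReal.ofReal (1 - δ) ≤
      Measure.pi (fun _ : Fin n => μ)
        {x | (1 / 2 : ℝ) * (∫ t, (f t) ^ 2 ∂μ) - 5 * M ^ 2 / (3 * n) * Real.log (2 / δ) ≤
            (1 / n : ℝ) * ∑ i, (f (x i)) ^ 2 ∧
          (1 / n : ℝ) * ∑ i, (f (x i)) ^ 2 ≤
            (3 / 2 : ℝ) * (∫ t, (f t) ^ 2 ∂μ) + 5 * M ^ 2 / (3 * n) * Real.log (2 / δ)} := by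
  obtain ⟨hδ0, hδ1⟩ := hδ
  have hn' : (0:ℝ) < n := by exact_mod_cast hn
  set E : ℝ := ∫ t, (f t) ^ 2 ∂μ with hE
  set L : ℝ := Real.log (2 / δ) with hLdef
  have hL : 0 < L := Real.log_pos (by rw [lt_div_iff₀ hδ0]; linarith)
  have hexpL : Real.exp (-L) = δ / 2 := by
    rw [hLdef, ← Real.log_inv, Real.exp_log (by positivity)]
    rw [inv_div]
  -- basic integrability and bounds
  have hf2 : ∀ x, (f x) ^ 2 ≤ M ^ 2 := fun x => by
    calc (f x) ^ 2 = |f x| ^ 2 := (sq_abs _).symm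
    _ ≤ M ^ 2 := pow_le_pow_left₀ (abs_nonneg _) (hbound x) 2
  have hf2nn : ∀ x, (0:ℝ) ≤ (f x) ^ 2 := fun x => sq_nonneg _
  have hf2m : Measurable fun x => (f x) ^ 2 := hf.pow_const 2
  have hf2i : Integrable (fun x => (f x) ^ 2) μ := by
    refine (integrable_const (M ^ 2)).mono' hf2m.aestronglyMeasurable ?_
    exact Filter.Eventually.of_forall fun x => by
      rw [Real.norm_eq_abs, abs_of_nonneg (hf2nn x)]; exact hf2 x
  have hE0 : 0 ≤ E := integral_nonneg hf2nn
  have hEM : E ≤ M ^ 2 := by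
    calc E ≤ ∫ _t, M ^ 2 ∂μ := integral_mono hf2i (integrable_const _) hf2
    _ = M ^ 2 := by simp
  have hf4i : Integrable (fun x => ((f x) ^ 2) ^ 2) μ := by
    refine (integrable_const (M ^ 4)).mono' ((hf2m.pow_const 2).aestronglyMeasurable) ?_
    refine Filter.Eventually.of_forall fun x => ?_
    rw [Real.norm_eq_abs, abs_of_nonneg (by positivity)]
    calc ((f x) ^ 2) ^ 2 ≤ (M ^ 2) ^ 2 := pow_le_pow_left₀ (hf2nn x) (hf2 x) 2
    _ = M ^ 4 := by ring
  have hf4le : ∫ x, ((f x) ^ 2) ^ 2 ∂μ ≤ M ^ 2 * E := by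
    calc ∫ x, ((f x) ^ 2) ^ 2 ∂μ ≤ ∫ x, M ^ 2 * (f x) ^ 2 ∂μ := by
          refine integral_mono hf4i (hf2i.const_mul _) fun x => ?_
          calc ((f x) ^ 2) ^ 2 = (f x) ^ 2 * (f x) ^ 2 := by ring
          _ ≤ M ^ 2 * (f x) ^ 2 := mul_le_mul_of_nonneg_right (hf2 x) (hf2nn x)
    _ = M ^ 2 * E := by rw [integral_const_mul]
  -- centered variable facts
  have hvar : ∫ x, ((f x) ^ 2 - E) ^ 2 ∂μ ≤ M ^ 2 * E := by
    have hexpand : ∀ x, ((f x) ^ 2 - E) ^ 2 = ((f x) ^ 2) ^ 2 - 2 * E * (f x) ^ 2 + E ^ 2 :=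
      fun x => by ring
    have h1 : ∫ x, ((f x) ^ 2 - E) ^ 2 ∂μ
        = (∫ x, ((f x) ^ 2) ^ 2 ∂μ) - 2 * E * E + E ^ 2 := by
      rw [integral_congr_ae (Filter.Eventually.of_forall hexpand)]
      have e1 : ∫ x, (((f x) ^ 2) ^ 2 - 2 * E * (f x) ^ 2 + E ^ 2) ∂μ
          = (∫ x, (((f x) ^ 2) ^ 2 - 2 * E * (f x) ^ 2) ∂μ) + ∫ _x, E ^ 2 ∂μ :=
        integral_add (hf4i.sub (hf2i.const_mul _)) (integrable_const _)
      have e2 : ∫ x, (((f x) ^ 2) ^ 2 - 2 * E * (f x) ^ 2) ∂μ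
          = (∫ x, ((f x) ^ 2) ^ 2 ∂μ) - ∫ x, 2 * E * (f x) ^ 2 ∂μ :=
        integral_sub hf4i (hf2i.const_mul _)
      rw [e1, e2, integral_const_mul, integral_const]
      simp [← hE]
    rw [h1]
    nlinarith [sq_nonneg E, hf4le]
  have hmean : ∫ x, ((f x) ^ 2 - E) ∂μ = 0 := by
    rw [integral_sub hf2i (integrable_const _), integral_const]
    simp [← hE]
  -- the key tail bound, for a good threshold T
  have main : ∀ T : ℝ, Real.sqrt (2 * (M ^ 2 * E) * L / n) + 2 * M ^ 2 * L / (3 * n) ≤ T →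
      ENNReal.ofReal (1 - δ) ≤ Measure.pi (fun _ : Fin n => μ)
        {x | |(1 / n : ℝ) * ∑ i, (f (x i)) ^ 2 - E| ≤ T} := by
    intro T hT
    set ν : Measure (Fin n → X) := Measure.pi (fun _ : Fin n => μ) with hν
    haveI : IsProbabilityMeasure ν := by rw [hν]; infer_instance
    have htail1 : ν {x | (n : ℝ) * T ≤ ∑ i, ((f (x i)) ^ 2 - E)} ≤
        ENNReal.ofReal (Real.exp (-L)) := by
      refine bernstein_tail μ (fun y => (f y) ^ 2 - E) (hf2m.sub_const E) (M ^ 2) (by positivity)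
        (fun y => by show f y ^ 2 - E ≤ M ^ 2; linarith [hf2 y, hE0])
        (fun y => by show -M ^ 2 ≤ f y ^ 2 - E; linarith [hf2nn y, hEM]) hmean
        (M ^ 2 * E) (by positivity) hvar n hn L hL T hT
    have htail2 : ν {x | (n : ℝ) * T ≤ ∑ i, (E - (f (x i)) ^ 2)} ≤
        ENNReal.ofReal (Real.exp (-L)) := by
      have hmean2 : ∫ x, (E - (f x) ^ 2) ∂μ = 0 := by
        rw [integral_sub (integrable_const _) hf2i, integral_const]
        simp [← hE]
      have hvar2 : ∫ x, (E - (f x) ^ 2) ^ 2 ∂μ ≤ M ^ 2 * E := by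
        have : ∀ x, (E - (f x) ^ 2) ^ 2 = ((f x) ^ 2 - E) ^ 2 := fun x => by ring
        rw [integral_congr_ae (Filter.Eventually.of_forall this)]
        exact hvar
      exact bernstein_tail μ (fun y => E - (f y) ^ 2) ((measurable_const.sub hf2m))
        (M ^ 2) (by positivity) (fun y => by show E - f y ^ 2 ≤ M ^ 2; linarith [hf2nn y, hEM])
        (fun y => by show -M ^ 2 ≤ E - f y ^ 2; linarith [hf2 y, hE0]) hmean2
        (M ^ 2 * E) (by positivity) hvar2
        n hn L hL T hT
    set G : Set (Fin n → X) := {x | |(1 / n : ℝ) * ∑ i, (f (x i)) ^ 2 - E| ≤ T} with hG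
    have hGm : MeasurableSet G := by
      have hmeas : Measurable fun x : Fin n → X => |(1 / n : ℝ) * ∑ i, (f (x i)) ^ 2 - E| := by
        apply Measurable.abs
        apply Measurable.sub_const
        apply Measurable.const_mul
        exact Finset.measurable_sum _ fun i _ => (hf.comp (measurable_pi_apply i)).pow_const 2
      exact measurableSet_le hmeas measurable_const
    have hsub : Gᶜ ⊆ {x | (n : ℝ) * T ≤ ∑ i, ((f (x i)) ^ 2 - E)} ∪
        {x | (n : ℝ) * T ≤ ∑ i, (E - (f (x i)) ^ 2)} := by
      intro x hx
      rw [Set.mem_compl_iff, hG, Set.mem_setOf_eq, not_le] at hx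
      have hsum1 : ∑ i, ((f (x i)) ^ 2 - E) = (∑ i, (f (x i)) ^ 2) - n * E := by
        rw [Finset.sum_sub_distrib, Finset.sum_const, Finset.card_univ, Fintype.card_fin]
        simp [nsmul_eq_mul]
      have hsum2 : ∑ i, (E - (f (x i)) ^ 2) = n * E - ∑ i, (f (x i)) ^ 2 := by
        rw [Finset.sum_sub_distrib, Finset.sum_const, Finset.card_univ, Fintype.card_fin]
        simp [nsmul_eq_mul]
      rcases lt_abs.1 hx with h | h
      · left
        rw [Set.mem_setOf_eq, hsum1]
        have := mul_lt_mul_of_pos_left h hn'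
        rw [mul_sub] at this
        have hh : (n:ℝ) * ((1 / n : ℝ) * ∑ i, (f (x i)) ^ 2) = ∑ i, (f (x i)) ^ 2 := by
          field_simp
        rw [hh] at this
        linarith
      · right
        rw [Set.mem_setOf_eq, hsum2]
        have h' : (1 / n : ℝ) * ∑ i, (f (x i)) ^ 2 - E < -T := by linarith
        have := mul_lt_mul_of_pos_left h' hn'
        rw [mul_sub] at this
        have hh : (n:ℝ) * ((1 / n : ℝ) * ∑ i, (f (x i)) ^ 2) = ∑ i, (f (x i)) ^ 2 := by
          field_simp
        rw [hh] at this
        have hnT : (n:ℝ) * -T = -((n:ℝ) * T) := by ring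
        rw [hnT] at this
        linarith
    have hGc : ν Gᶜ ≤ ENNReal.ofReal δ := by
      calc ν Gᶜ ≤ ν ({x | (n : ℝ) * T ≤ ∑ i, ((f (x i)) ^ 2 - E)} ∪
          {x | (n : ℝ) * T ≤ ∑ i, (E - (f (x i)) ^ 2)}) := measure_mono hsub
      _ ≤ ν {x | (n : ℝ) * T ≤ ∑ i, ((f (x i)) ^ 2 - E)} +
          ν {x | (n : ℝ) * T ≤ ∑ i, (E - (f (x i)) ^ 2)} := measure_union_le _ _
      _ ≤ ENNReal.ofReal (Real.exp (-L)) + ENNReal.ofReal (Real.exp (-L)) :=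
          add_le_add htail1 htail2
      _ = ENNReal.ofReal δ := by
          rw [hexpL, ← ENNReal.ofReal_add (by positivity) (by positivity)]
          norm_num
    calc ENNReal.ofReal (1 - δ) = 1 - ENNReal.ofReal δ := by
          rw [ENNReal.ofReal_sub 1 hδ0.le, ENNReal.ofReal_one]
    _ ≤ 1 - ν Gᶜ := tsub_le_tsub_left hGc 1
    _ ≤ ν G := by
        rw [tsub_le_iff_right]
        rw [measure_add_measure_compl hGm, measure_univ]
  -- conclude part 1
  have part1 : ∀ α : ℝ, 0 < α →
      ENNReal.ofReal (1 - δ) ≤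
        Measure.pi (fun _ : Fin n => μ)
          {x | |(1 / n : ℝ) * ∑ i, (f (x i)) ^ 2 - E| ≤
            α * M ^ 2 * E + (3 + 4 * α * M ^ 2) / (6 * α * n) * L} := by
    intro α hα
    refine main _ ?_
    have hsplit : (3 + 4 * α * M ^ 2) / (6 * α * n) * L
        = L / (2 * α * n) + 2 * M ^ 2 * L / (3 * n) := by
      field_simp
      ring
    have hsqrt : Real.sqrt (2 * (M ^ 2 * E) * L / n) ≤ α * M ^ 2 * E + L / (2 * α * n) := by
      have harg : 2 * (M ^ 2 * E) * L / n = (2 * α * M ^ 2 * E) * (L / (α * n)) := by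
        field_simp
      rw [harg, Real.sqrt_mul (by positivity)]
      have hp : (0:ℝ) ≤ 2 * α * M ^ 2 * E := by positivity
      have hq : (0:ℝ) ≤ L / (α * n) := by positivity
      have h1 := Real.sq_sqrt hp
      have h2 := Real.sq_sqrt hq
      have key : Real.sqrt (2 * α * M ^ 2 * E) * Real.sqrt (L / (α * n))
          ≤ (2 * α * M ^ 2 * E + L / (α * n)) / 2 := by
        nlinarith [sq_nonneg (Real.sqrt (2 * α * M ^ 2 * E) - Real.sqrt (L / (α * n)))]
      have heq : (2 * α * M ^ 2 * E + L / (α * n)) / 2 = α * M ^ 2 * E + L / (2 * α * n) := by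
        ring
      linarith
    linarith [hsplit, hsqrt]
  refine ⟨part1, ?_⟩
  -- part 2 from part 1 with α = 1/(2M²)
  have hα0 : (0:ℝ) < 1 / (2 * M ^ 2) := by positivity
  have h1 := part1 (1 / (2 * M ^ 2)) hα0
  refine le_trans h1 (measure_mono ?_)
  intro x hx
  rw [Set.mem_setOf_eq] at hx
  have hc1 : (1 / (2 * M ^ 2)) * M ^ 2 * E = E / 2 := by
    field_simp
  have hc2 : (3 + 4 * (1 / (2 * M ^ 2)) * M ^ 2) / (6 * (1 / (2 * M ^ 2)) * n) * L
      = 5 * M ^ 2 / (3 * n) * L := by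
    have hM2 : (M:ℝ) ^ 2 ≠ 0 := by positivity
    field_simp
    ring
  rw [hc1, hc2] at hx
  have habs := abs_le.1 hx
  constructor
  · linarith [habs.1]
  · linarith [habs.2]
end

section
/- Let H be a real inner product space, X ⊆ ℝ^d, and Φ : X → H a map, and set k(x,y) := ⟨Φ(x), Φ(y)⟩_H. Suppose there exist α ∈ (0,1] and L > 0 such that |k(x₁,x₂) − k(y₁,y₂)| ≤ L·‖(x₁,x₂) − (y₁,y₂)‖^α for all x₁,x₂,y₁,y₂ ∈ X (Euclidean norm on ℝ^{2d}). Then every f ∈ H induces a Hölder-continuous function: for all x, y ∈ X, |⟨Φ(x), f⟩ − ⟨Φ(y), f⟩| ≤ √(2L)·‖f‖_H·‖x − y‖^{α/2}. -/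
open scoped RealInnerProductSpace

/-- if the kernel `k(x,y) = ⟪Φ(x), Φ(y)⟫` is Hölder of order `α` (Euclidean norm
on `ℝ^{2d}`), then every `f ∈ H` induces a Hölder-`α/2` function:
`|⟪Φ(x), f⟫ - ⟪Φ(y), f⟫| ≤ √(2L)·‖f‖·‖x-y‖^{α/2}`. -/
theorem stmt6 {H : Type*} [NormedAddCommGroup H] [InnerProductSpace ℝ H]
    {d : ℕ} (X : Set (EuclideanSpace ℝ (Fin d))) (Φ : EuclideanSpace ℝ (Fin d) → H)
    (α L : ℝ) (hα : α ∈ Set.Ioc (0:ℝ) 1) (hL : 0 < L)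
    (hHolder : ∀ x₁ ∈ X, ∀ x₂ ∈ X, ∀ y₁ ∈ X, ∀ y₂ ∈ X,
      |⟪Φ x₁, Φ x₂⟫ - ⟪Φ y₁, Φ y₂⟫| ≤
        L * (Real.sqrt (‖x₁ - y₁‖ ^ 2 + ‖x₂ - y₂‖ ^ 2)) ^ α) :
    ∀ f : H, ∀ x ∈ X, ∀ y ∈ X,
      |⟪Φ x, f⟫ - ⟪Φ y, f⟫| ≤ Real.sqrt (2 * L) * ‖f‖ * ‖x - y‖ ^ (α / 2) := by
  obtain ⟨hα0, hα1⟩ := hα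
  intro f x hx y hy
  have hxy : (0:ℝ) ≤ ‖x - y‖ := norm_nonneg _
  have hsq : Real.sqrt (‖x - y‖ ^ 2 + ‖x - y‖ ^ 2 * 0) = ‖x - y‖ := by
    rw [mul_zero, add_zero, Real.sqrt_sq hxy]
  have h1 : |⟪Φ x, Φ x⟫ - ⟪Φ y, Φ x⟫| ≤ L * ‖x - y‖ ^ α := by
    have := hHolder x hx x hx y hy x hx
    simpa [sub_self, Real.sqrt_sq hxy] using this
  have h2 : |⟪Φ x, Φ y⟫ - ⟪Φ y, Φ y⟫| ≤ L * ‖x - y‖ ^ α := by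
    have := hHolder x hx y hy y hy y hy
    simpa [sub_self, Real.sqrt_sq hxy] using this
  have hnorm : ‖Φ x - Φ y‖ ^ 2 ≤ 2 * L * ‖x - y‖ ^ α := by
    have hexp : ‖Φ x - Φ y‖ ^ 2 =
        (⟪Φ x, Φ x⟫ - ⟪Φ y, Φ x⟫) - (⟪Φ x, Φ y⟫ - ⟪Φ y, Φ y⟫) := by
      rw [← real_inner_self_eq_norm_sq]
      simp [inner_sub_left, inner_sub_right, real_inner_comm (Φ x) (Φ y)]
      rw [norm_sub_sq_real]; ring
    calc ‖Φ x - Φ y‖ ^ 2 = (⟪Φ x, Φ x⟫ - ⟪Φ y, Φ x⟫) - (⟪Φ x, Φ y⟫ - ⟪Φ y, Φ y⟫) := hexp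
      _ ≤ |(⟪Φ x, Φ x⟫ - ⟪Φ y, Φ x⟫) - (⟪Φ x, Φ y⟫ - ⟪Φ y, Φ y⟫)| := le_abs_self _
      _ ≤ |⟪Φ x, Φ x⟫ - ⟪Φ y, Φ x⟫| + |⟪Φ x, Φ y⟫ - ⟪Φ y, Φ y⟫| := abs_sub _ _
      _ ≤ L * ‖x - y‖ ^ α + L * ‖x - y‖ ^ α := add_le_add h1 h2
      _ = 2 * L * ‖x - y‖ ^ α := by ring
  have hΦ : ‖Φ x - Φ y‖ ≤ Real.sqrt (2 * L) * ‖x - y‖ ^ (α / 2) := by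
    have h := Real.sqrt_le_sqrt hnorm
    rw [Real.sqrt_sq (norm_nonneg _)] at h
    rw [Real.sqrt_mul (by positivity : (0:ℝ) ≤ 2 * L)] at h
    have heq : Real.sqrt (‖x - y‖ ^ α) = ‖x - y‖ ^ (α / 2) := by
      rw [Real.sqrt_eq_rpow, ← Real.rpow_mul hxy]
      norm_num [mul_one_div]
    rwa [heq] at h
  calc |⟪Φ x, f⟫ - ⟪Φ y, f⟫| = |⟪Φ x - Φ y, f⟫| := by rw [inner_sub_left]
    _ ≤ ‖Φ x - Φ y‖ * ‖f‖ := abs_real_inner_le_norm _ _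
    _ ≤ Real.sqrt (2 * L) * ‖x - y‖ ^ (α / 2) * ‖f‖ :=
        mul_le_mul_of_nonneg_right hΦ (norm_nonneg _)
    _ = Real.sqrt (2 * L) * ‖f‖ * ‖x - y‖ ^ (α / 2) := by ring
end

section
/- Let (X, 𝒜, μ) be a probability space, H a real separable Hilbert space, and Φ : X → H a strongly measurable map with ‖Φ(x)‖_H ≤ κ for all x ∈ X. Fix f ∈ H and set g(x) := ⟨Φ(x), f⟩, ‖g‖_∞ := sup_{x ∈ X} |g(x)|, and ‖g‖_{L²}² := ∫_X g(x)² dμ(x). Let x_1, …, x_n be i.i.d. samples from μ. Then for every δ ∈ (0,1), with probability at least 1 − δ, ‖ (1/n)·Σ_{i=1}^n g(x_i)·Φ(x_i) − ∫_X g(x)·Φ(x) dμ(x) ‖_H ≤ 2κ·( 2‖g‖_∞/n + ‖g‖_{L²}/√n )·ln(2/δ), where the integral is a Bochner integral in H. -/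
open MeasureTheory
open scoped RealInnerProductSpace



lemma aux_sinh_le_mul_cosh {z : ℝ} (hz : 0 ≤ z) : Real.sinh z ≤ z * Real.cosh z := by
  have mono : MonotoneOn (fun s : ℝ => s * Real.cosh s - Real.sinh s) (Set.Ici 0) := by
    refine monotoneOn_of_deriv_nonneg (convex_Ici 0) ?_ ?_ ?_
    · exact ((continuous_id.mul Real.continuous_cosh).sub Real.continuous_sinh).continuousOn
    · intro x hx
      exact (((hasDerivAt_id x).mul (Real.hasDerivAt_cosh x)).sub
        (Real.hasDerivAt_sinh x)).differentiableAt.differentiableWithinAt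
    · intro x hx
      rw [interior_Ici] at hx
      have h : HasDerivAt (fun s : ℝ => s * Real.cosh s - Real.sinh s)
          (1 * Real.cosh x + x * Real.sinh x - Real.cosh x) x :=
        ((hasDerivAt_id x).mul (Real.hasDerivAt_cosh x)).sub (Real.hasDerivAt_sinh x)
      rw [h.deriv]
      have h2 : 0 ≤ Real.sinh x := Real.sinh_nonneg_iff.mpr (le_of_lt hx)
      have h3 : 0 ≤ x * Real.sinh x := mul_nonneg (le_of_lt hx) h2
      linarith
  have h0 := mono Set.self_mem_Ici (Set.mem_Ici.mpr hz) hz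
  simp only [zero_mul, Real.sinh_zero, sub_zero] at h0
  linarith

lemma aux_sinh_div_mono : MonotoneOn (fun s : ℝ => Real.sinh s / s) (Set.Ioi 0) := by
  refine monotoneOn_of_deriv_nonneg (convex_Ioi 0) ?_ ?_ ?_
  · exact ContinuousOn.div Real.continuous_sinh.continuousOn continuousOn_id
      (fun x hx => ne_of_gt hx)
  · intro x hx
    rw [interior_Ioi] at hx
    exact ((Real.hasDerivAt_sinh x).div (hasDerivAt_id x) (ne_of_gt hx)).differentiableAt.differentiableWithinAt
  · intro x hx
    rw [interior_Ioi] at hx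
    have h : HasDerivAt (fun s : ℝ => Real.sinh s / s)
        ((Real.cosh x * x - Real.sinh x * 1) / x ^ 2) x :=
      (Real.hasDerivAt_sinh x).div (hasDerivAt_id x) (ne_of_gt hx)
    rw [h.deriv]
    have h2 := aux_sinh_le_mul_cosh (le_of_lt hx)
    have h3 : (0:ℝ) < x ^ 2 := pow_pos hx 2
    apply div_nonneg _ h3.le
    nlinarith

lemma aux_convexOn {l : ℝ} (hl : 0 < l) :
    ConvexOn ℝ (Set.Ici 0) (fun x : ℝ => Real.cosh (l * Real.sqrt x)) := by
  have hderiv : ∀ x : ℝ, 0 < x → HasDerivAt (fun x : ℝ => Real.cosh (l * Real.sqrt x))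
      (Real.sinh (l * Real.sqrt x) * (l * (1 / (2 * Real.sqrt x)))) x := by
    intro x hx
    exact ((Real.hasDerivAt_sqrt (ne_of_gt hx)).const_mul l).cosh
  refine MonotoneOn.convexOn_of_deriv (convex_Ici 0) ?_ ?_ ?_
  · exact (Real.continuous_cosh.comp (continuous_const.mul Real.continuous_sqrt)).continuousOn
  · intro x hx
    rw [interior_Ici] at hx
    exact (hderiv x hx).differentiableAt.differentiableWithinAt
  · rw [interior_Ici]
    have hval : ∀ x : ℝ, 0 < x → deriv (fun x : ℝ => Real.cosh (l * Real.sqrt x)) x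
        = (l ^ 2 / 2) * (Real.sinh (l * Real.sqrt x) / (l * Real.sqrt x)) := by
      intro x hx
      rw [(hderiv x hx).deriv]
      have hs : 0 < Real.sqrt x := Real.sqrt_pos.mpr hx
      field_simp
    intro x hx y hy hxy
    rw [hval x hx, hval y hy]
    apply mul_le_mul_of_nonneg_left _ (by positivity)
    have hsx : 0 < Real.sqrt x := Real.sqrt_pos.mpr hx
    have hsy : 0 < Real.sqrt y := Real.sqrt_pos.mpr hy
    exact aux_sinh_div_mono (Set.mem_Ioi.mpr (by positivity)) (Set.mem_Ioi.mpr (by positivity))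
      (mul_le_mul_of_nonneg_left (Real.sqrt_le_sqrt hxy) hl.le)

lemma aux_exp_quad {z : ℝ} (hz : 0 ≤ z) :
    Real.exp z - 1 - z ≤ z ^ 2 * Real.exp z / 2 := by
  have h0 : ∀ w : ℝ, Real.exp w - 1 ≤ w * Real.exp w := by
    intro w
    have e1 : (-w) + 1 ≤ Real.exp (-w) := Real.add_one_le_exp _
    have e2 : (0:ℝ) < Real.exp w := Real.exp_pos w
    have e3 : Real.exp (-w) * Real.exp w = 1 := by
      rw [← Real.exp_add]; simp
    nlinarith [mul_le_mul_of_nonneg_right e1 e2.le]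
  have mono : MonotoneOn (fun s : ℝ => s ^ 2 * Real.exp s / 2 + 1 + s - Real.exp s)
      (Set.Ici 0) := by
    refine monotoneOn_of_deriv_nonneg (convex_Ici 0) ?_ ?_ ?_
    · fun_prop
    · intro x hx
      have h : HasDerivAt (fun s : ℝ => s ^ 2 * Real.exp s / 2 + 1 + s - Real.exp s)
          (((2 * x ^ 1 * Real.exp x + x ^ 2 * Real.exp x) / 2 + 1) - Real.exp x) x := by
        have hA : HasDerivAt (fun s : ℝ => s ^ 2) ((2:ℕ) * x ^ 1) x := hasDerivAt_pow 2 x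
        exact ((((hA.mul (Real.hasDerivAt_exp x)).div_const 2).add_const 1).add
          (hasDerivAt_id x)).sub (Real.hasDerivAt_exp x) |>.congr_deriv (by push_cast; ring)
      exact h.differentiableAt.differentiableWithinAt
    · intro x hx
      rw [interior_Ici] at hx
      have hA : HasDerivAt (fun s : ℝ => s ^ 2) ((2:ℕ) * x ^ 1) x := hasDerivAt_pow 2 x
      have h : HasDerivAt (fun s : ℝ => s ^ 2 * Real.exp s / 2 + 1 + s - Real.exp s)
          ((2 * x ^ 1 * Real.exp x + x ^ 2 * Real.exp x) / 2 + 1 - Real.exp x) x := by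
        exact ((((hA.mul (Real.hasDerivAt_exp x)).div_const 2).add_const 1).add
          (hasDerivAt_id x)).sub (Real.hasDerivAt_exp x) |>.congr_deriv (by push_cast; ring)
      rw [h.deriv]
      have := h0 x
      have e2 : (0:ℝ) < Real.exp x := Real.exp_pos x
      nlinarith [sq_nonneg x, (Set.mem_Ioi.mp hx).le]
  have h1 := mono Set.self_mem_Ici (Set.mem_Ici.mpr hz) hz
  simp only [Real.exp_zero] at h1
  norm_num at h1
  linarith

lemma aux_cosh_quad {z : ℝ} (hz : 0 ≤ z) :
    Real.cosh z ≤ 1 + z ^ 2 * Real.exp z / 2 := by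
  have h1 : Real.cosh z = Real.exp z - Real.sinh z := by
    have := Real.cosh_add_sinh z; linarith
  have h2 : z ≤ Real.sinh z := Real.self_le_sinh_iff.mpr hz
  have := aux_exp_quad hz
  linarith


lemma aux_key_real {l a b p c : ℝ} (hl : 0 < l) (ha0 : 0 < a) (hb0 : 0 < b) (hc : 0 ≤ c)
    (hp : |p| ≤ a * b) (hc2 : c ^ 2 = a ^ 2 + 2 * p + b ^ 2) :
    Real.cosh (l * c) ≤
      Real.cosh (l * a) * (1 + (l * b) ^ 2 * Real.exp (l * b) / 2)
        + (l * Real.sinh (l * a) / a) * p := by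
  have hab : 0 < a * b := mul_pos ha0 hb0
  have chord : Real.cosh (l * c) ≤
      Real.cosh (l * a) * Real.cosh (l * b)
        + (p / (a * b)) * (Real.sinh (l * a) * Real.sinh (l * b)) := by
    have cvx := aux_convexOn hl
    set θ : ℝ := (a * b + p) / (2 * (a * b)) with hθ_def
    have hθ0 : 0 ≤ θ := by
      apply div_nonneg _ (by positivity)
      linarith [(abs_le.mp hp).1]
    have hθ1 : 1 - θ = (a * b - p) / (2 * (a * b)) := by
      rw [hθ_def, eq_div_iff (by positivity : (2 * (a * b) : ℝ) ≠ 0)]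
      field_simp
      ring
    have hθ0' : 0 ≤ 1 - θ := by
      rw [hθ1]
      apply div_nonneg _ (by positivity)
      linarith [(abs_le.mp hp).2]
    have hmem1 : ((a - b) ^ 2 : ℝ) ∈ Set.Ici (0:ℝ) := Set.mem_Ici.mpr (by positivity)
    have hmem2 : ((a + b) ^ 2 : ℝ) ∈ Set.Ici (0:ℝ) := Set.mem_Ici.mpr (by positivity)
    have hcomb := cvx.2 hmem1 hmem2 hθ0' hθ0 (by linarith)
    simp only [smul_eq_mul] at hcomb
    have harg : (1 - θ) * (a - b) ^ 2 + θ * (a + b) ^ 2 = c ^ 2 := by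
      rw [hc2, hθ1, hθ_def]
      field_simp
      ring
    rw [harg] at hcomb
    have hfc : Real.cosh (l * Real.sqrt (c ^ 2)) = Real.cosh (l * c) := by
      rw [Real.sqrt_sq hc]
    have hf1 : Real.cosh (l * Real.sqrt ((a - b) ^ 2)) = Real.cosh (l * (a - b)) := by
      rw [Real.sqrt_sq_eq_abs, ← Real.cosh_abs (l * (a - b)), abs_mul, abs_of_pos hl]
    have hf2 : Real.cosh (l * Real.sqrt ((a + b) ^ 2)) = Real.cosh (l * (a + b)) := by
      rw [Real.sqrt_sq (by linarith)]
    rw [hfc, hf1, hf2] at hcomb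
    have hexp : (1 - θ) * Real.cosh (l * (a - b)) + θ * Real.cosh (l * (a + b))
        = Real.cosh (l * a) * Real.cosh (l * b)
          + (p / (a * b)) * (Real.sinh (l * a) * Real.sinh (l * b)) := by
      have e1 : l * (a - b) = l * a - l * b := by ring
      have e2 : l * (a + b) = l * a + l * b := by ring
      rw [e1, e2, Real.cosh_sub, Real.cosh_add, hθ1, hθ_def]
      field_simp
      ring
    linarith [hexp ▸ hcomb]
  have hsa : 0 ≤ Real.sinh (l * a) := Real.sinh_nonneg_iff.mpr (by positivity)
  have hsb : l * b ≤ Real.sinh (l * b) := Real.self_le_sinh_iff.mpr (by positivity)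
  have step2 : (p / (a * b)) * (Real.sinh (l * a) * Real.sinh (l * b)) ≤
      (l * Real.sinh (l * a) / a) * p + Real.sinh (l * a) * (Real.sinh (l * b) - l * b) := by
    have hsplit : (p / (a * b)) * (Real.sinh (l * a) * Real.sinh (l * b))
        = (l * Real.sinh (l * a) / a) * p
          + (p / (a * b)) * (Real.sinh (l * a) * (Real.sinh (l * b) - l * b)) := by
      field_simp
      ring
    rw [hsplit]
    have hfac : 0 ≤ Real.sinh (l * a) * (Real.sinh (l * b) - l * b) :=
      mul_nonneg hsa (by linarith)
    have hdle : (p / (a * b)) ≤ 1 := by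
      rw [div_le_one hab]
      exact (abs_le.mp hp).2
    nlinarith
  have hca : 0 < Real.cosh (l * a) := Real.cosh_pos _
  have hsa_le : Real.sinh (l * a) ≤ Real.cosh (l * a) := by
    linarith [Real.sinh_lt_cosh (l * a)]
  have step3 : Real.sinh (l * a) * (Real.sinh (l * b) - l * b)
      ≤ Real.cosh (l * a) * (Real.sinh (l * b) - l * b) :=
    mul_le_mul_of_nonneg_right hsa_le (by linarith)
  have step4 : Real.cosh (l * b) + Real.sinh (l * b) - l * b
      ≤ 1 + (l * b) ^ 2 * Real.exp (l * b) / 2 := by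
    have h1 : Real.cosh (l * b) + Real.sinh (l * b) = Real.exp (l * b) := Real.cosh_add_sinh _
    have := aux_exp_quad (z := l * b) (by positivity)
    linarith
  calc Real.cosh (l * c)
      ≤ Real.cosh (l * a) * Real.cosh (l * b)
        + (p / (a * b)) * (Real.sinh (l * a) * Real.sinh (l * b)) := chord
    _ ≤ Real.cosh (l * a) * Real.cosh (l * b)
        + ((l * Real.sinh (l * a) / a) * p
          + Real.cosh (l * a) * (Real.sinh (l * b) - l * b)) := by linarith
    _ = Real.cosh (l * a) * (Real.cosh (l * b) + Real.sinh (l * b) - l * b)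
        + (l * Real.sinh (l * a) / a) * p := by ring
    _ ≤ Real.cosh (l * a) * (1 + (l * b) ^ 2 * Real.exp (l * b) / 2)
        + (l * Real.sinh (l * a) / a) * p := by nlinarith [step4, hca]

lemma aux_key {H : Type*} [NormedAddCommGroup H] [InnerProductSpace ℝ H]
    {l : ℝ} (hl : 0 < l) (t y : H) :
    Real.cosh (l * ‖t + y‖) ≤
      Real.cosh (l * ‖t‖) * (1 + (l * ‖y‖) ^ 2 * Real.exp (l * ‖y‖) / 2)
        + (l * Real.sinh (l * ‖t‖) / ‖t‖) * ⟪t, y⟫ := by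
  by_cases ht0 : t = 0
  · subst ht0
    simp only [norm_zero, mul_zero, Real.cosh_zero, Real.sinh_zero, zero_add,
      inner_zero_left, mul_zero, zero_div, one_mul, add_zero]
    have := aux_cosh_quad (z := l * ‖y‖) (by positivity)
    linarith
  by_cases hy0 : y = 0
  · subst hy0
    simp only [add_zero, norm_zero, mul_zero, inner_zero_right, Real.exp_zero]
    norm_num
  have ha0 : 0 < ‖t‖ := norm_pos_iff.mpr ht0
  have hb0 : 0 < ‖y‖ := norm_pos_iff.mpr hy0
  exact aux_key_real hl ha0 hb0 (norm_nonneg _) (abs_real_inner_le_norm t y)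
    (norm_add_sq_real t y)


lemma aux_int_bdd {α E : Type*} [MeasurableSpace α] {μ : Measure α}
    [IsFiniteMeasure μ] [NormedAddCommGroup E] {f : α → E} (hf : AEStronglyMeasurable f μ)
    (C : ℝ) (h : ∀ x, ‖f x‖ ≤ C) : Integrable f μ :=
  Integrable.mono' (integrable_const C) hf (Filter.Eventually.of_forall h)

lemma aux_cosh_norm_sm {α : Type*} [MeasurableSpace α] {H : Type*} [NormedAddCommGroup H]
    {f : α → H} (hf : StronglyMeasurable f) (l : ℝ) :
    StronglyMeasurable (fun x => Real.cosh (l * ‖f x‖)) :=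
  (Real.continuous_cosh.comp (continuous_const.mul continuous_norm)).comp_stronglyMeasurable hf

lemma aux_cosh_norm_bdd {u : H} {l C : ℝ} [NormedAddCommGroup H] (hl : 0 ≤ l)
    (h : ‖u‖ ≤ C) : ‖Real.cosh (l * ‖u‖)‖ ≤ Real.cosh (l * C) := by
  rw [Real.norm_eq_abs, abs_of_pos (Real.cosh_pos _)]
  rw [Real.cosh_le_cosh]
  have h0 : 0 ≤ l * ‖u‖ := by positivity
  rw [abs_of_nonneg h0, abs_of_nonneg (le_trans h0 (by nlinarith [norm_nonneg u]))]
  nlinarith [norm_nonneg u]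

lemma aux_step {X : Type*} [MeasurableSpace X] {μ : Measure X} [IsProbabilityMeasure μ]
    {H : Type*} [NormedAddCommGroup H] [InnerProductSpace ℝ H] [CompleteSpace H]
    {ξ : X → H} (hξ : StronglyMeasurable ξ) {l L v : ℝ} (hl : 0 < l)
    (hb : ∀ x, ‖ξ x‖ ≤ L) (hmean : ∫ x, ξ x ∂μ = 0)
    (hv : ∫ x, ‖ξ x‖ ^ 2 ∂μ ≤ v) (t : H) :
    ∫ x, Real.cosh (l * ‖t + ξ x‖) ∂μ
      ≤ (1 + l ^ 2 * v * Real.exp (l * L) / 2) * Real.cosh (l * ‖t‖) := by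
  have hL : 0 ≤ L := le_trans (norm_nonneg _) (hb (Classical.choice
    (by
      by_contra hno
      rw [not_nonempty_iff] at hno
      have h1 : μ Set.univ = 1 := measure_univ
      rw [Set.univ_eq_empty_iff.mpr hno, measure_empty] at h1
      simp at h1)))
  have hξi : Integrable ξ μ := aux_int_bdd hξ.aestronglyMeasurable L hb
  set c1 := Real.cosh (l * ‖t‖) with hc1
  set c2 := l * Real.sinh (l * ‖t‖) / ‖t‖ with hc2
  have hc1pos : 0 < c1 := Real.cosh_pos _
  set w : X → ℝ := fun x => ‖ξ x‖ ^ 2 * Real.exp (l * ‖ξ x‖) with hw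
  have hw_sm : StronglyMeasurable w :=
    ((continuous_pow 2).mul (Real.continuous_exp.comp
      (continuous_const.mul continuous_id))).comp_stronglyMeasurable hξ.norm
  have hw_bdd : ∀ x, ‖w x‖ ≤ L ^ 2 * Real.exp (l * L) := by
    intro x
    have h1 : 0 ≤ ‖ξ x‖ := norm_nonneg _
    have h2 : Real.exp (l * ‖ξ x‖) ≤ Real.exp (l * L) :=
      Real.exp_le_exp.mpr (by nlinarith [hb x])
    rw [Real.norm_eq_abs, abs_of_nonneg (by positivity)]
    have h3 : ‖ξ x‖ ^ 2 ≤ L ^ 2 := by nlinarith [hb x]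
    exact mul_le_mul h3 h2 (Real.exp_pos _).le (by positivity)
  have hw_int : Integrable w μ := aux_int_bdd hw_sm.aestronglyMeasurable _ hw_bdd
  have hsq_int : Integrable (fun x => ‖ξ x‖ ^ 2) μ := by
    apply aux_int_bdd ((continuous_pow 2).comp_stronglyMeasurable hξ.norm).aestronglyMeasurable
      (L ^ 2)
    intro x
    rw [Real.norm_eq_abs, abs_of_nonneg (by positivity)]
    nlinarith [hb x, norm_nonneg (ξ x)]
  have hw_le : ∫ x, w x ∂μ ≤ Real.exp (l * L) * v := by
    have h1 : ∫ x, w x ∂μ ≤ ∫ x, Real.exp (l * L) * ‖ξ x‖ ^ 2 ∂μ := by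
      apply integral_mono hw_int (hsq_int.const_mul _)
      intro x
      have h2 : Real.exp (l * ‖ξ x‖) ≤ Real.exp (l * L) :=
        Real.exp_le_exp.mpr (by nlinarith [hb x, norm_nonneg (ξ x)])
      simp only [hw]
      nlinarith [sq_nonneg ‖ξ x‖, Real.exp_pos (l * ‖ξ x‖)]
    rw [MeasureTheory.integral_const_mul] at h1
    have h3 : 0 ≤ Real.exp (l * L) := (Real.exp_pos _).le
    nlinarith [h1, mul_le_mul_of_nonneg_left hv h3]
  have hinner_int : Integrable (fun x => (⟪t, ξ x⟫ : ℝ)) μ := hξi.const_inner t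
  have hG_int : Integrable
      (fun x => c1 * (1 + (l * ‖ξ x‖) ^ 2 * Real.exp (l * ‖ξ x‖) / 2) + c2 * ⟪t, ξ x⟫) μ := by
    have heq : (fun x => c1 * (1 + (l * ‖ξ x‖) ^ 2 * Real.exp (l * ‖ξ x‖) / 2) + c2 * ⟪t, ξ x⟫)
        = fun x => (c1 + (c1 * l ^ 2 / 2) * w x) + c2 * ⟪t, ξ x⟫ := by
      funext x
      simp only [hw]
      ring
    rw [heq]
    exact ((integrable_const c1).add (hw_int.const_mul _)).add (hinner_int.const_mul c2)
  have hmono : ∫ x, Real.cosh (l * ‖t + ξ x‖) ∂μ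
      ≤ ∫ x, (c1 * (1 + (l * ‖ξ x‖) ^ 2 * Real.exp (l * ‖ξ x‖) / 2) + c2 * ⟪t, ξ x⟫) ∂μ := by
    apply integral_mono_of_nonneg (Filter.Eventually.of_forall fun x => (Real.cosh_pos _).le)
      hG_int
    exact Filter.Eventually.of_forall fun x => aux_key hl t (ξ x)
  have hcalc : ∫ x, (c1 * (1 + (l * ‖ξ x‖) ^ 2 * Real.exp (l * ‖ξ x‖) / 2) + c2 * ⟪t, ξ x⟫) ∂μ
      = c1 + (c1 * l ^ 2 / 2) * ∫ x, w x ∂μ := by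
    have heq : (fun x => c1 * (1 + (l * ‖ξ x‖) ^ 2 * Real.exp (l * ‖ξ x‖) / 2) + c2 * ⟪t, ξ x⟫)
        = fun x => (c1 + (c1 * l ^ 2 / 2) * w x) + c2 * ⟪t, ξ x⟫ := by
      funext x
      simp only [hw]
      ring
    have i1 : Integrable (fun _ : X => c1) μ := integrable_const c1
    have i2 : Integrable (fun x => c1 * l ^ 2 / 2 * w x) μ := hw_int.const_mul _
    have i12 : Integrable (fun x => c1 + c1 * l ^ 2 / 2 * w x) μ := by exact i1.add i2
    have i3 : Integrable (fun x => c2 * ⟪t, ξ x⟫) μ := hinner_int.const_mul c2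
    rw [heq, integral_add i12 i3, integral_add i1 i2, integral_const,
      MeasureTheory.integral_const_mul, MeasureTheory.integral_const_mul,
      integral_inner hξi t, hmean, inner_zero_right]
    simp [measure_univ]
  rw [hcalc] at hmono
  have hfin : c1 + (c1 * l ^ 2 / 2) * ∫ x, w x ∂μ
      ≤ (1 + l ^ 2 * v * Real.exp (l * L) / 2) * c1 := by
    have h4 : 0 ≤ c1 * l ^ 2 / 2 := by positivity
    nlinarith [mul_le_mul_of_nonneg_left hw_le h4]
  linarith

lemma aux_iter {X : Type*} [MeasurableSpace X] {μ : Measure X} [IsProbabilityMeasure μ]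
    {H : Type*} [NormedAddCommGroup H] [InnerProductSpace ℝ H] [CompleteSpace H]
    {ξ : X → H} (hξ : StronglyMeasurable ξ) {l L v : ℝ} (hl : 0 < l) (hL : 0 ≤ L)
    (hv0 : 0 ≤ v) (hb : ∀ x, ‖ξ x‖ ≤ L) (hmean : ∫ x, ξ x ∂μ = 0)
    (hv : ∫ x, ‖ξ x‖ ^ 2 ∂μ ≤ v) :
    ∀ n : ℕ, ∫ x : Fin n → X, Real.cosh (l * ‖∑ i, ξ (x i)‖) ∂(Measure.pi fun _ => μ)
      ≤ (1 + l ^ 2 * v * Real.exp (l * L) / 2) ^ n := by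
  have hA0 : (0:ℝ) ≤ 1 + l ^ 2 * v * Real.exp (l * L) / 2 := by positivity
  have hsum_bdd : ∀ (k : ℕ) (z : Fin k → X), ‖∑ j, ξ (z j)‖ ≤ k * L := by
    intro k z
    calc ‖∑ j, ξ (z j)‖ ≤ ∑ j : Fin k, ‖ξ (z j)‖ := norm_sum_le _ _
      _ ≤ ∑ _j : Fin k, L := Finset.sum_le_sum fun j _ => hb _
      _ = k * L := by simp [Finset.sum_const, nsmul_eq_mul]
  have hsum_sm : ∀ k : ℕ, StronglyMeasurable (fun z : Fin k → X => ∑ j, ξ (z j)) := by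
    intro k
    exact Finset.stronglyMeasurable_fun_sum Finset.univ
      (fun j _ => hξ.comp_measurable (measurable_pi_apply j))
  intro n
  induction n with
  | zero =>
    simp only [Finset.univ_eq_empty, Finset.sum_empty, norm_zero, mul_zero, Real.cosh_zero,
      integral_const, measure_univ, ENNReal.toReal_one, probReal_univ, smul_eq_mul, one_mul, pow_zero, le_refl]
  | succ n ih =>
    set A := 1 + l ^ 2 * v * Real.exp (l * L) / 2 with hA
    have mp := measurePreserving_piFinSuccAbove (fun _ : Fin (n + 1) => μ) 0
    set e := MeasurableEquiv.piFinSuccAbove (fun _ : Fin (n + 1) => X) 0 with he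
    set h : X × (Fin n → X) → ℝ :=
      fun q => Real.cosh (l * ‖(∑ j, ξ (q.2 j)) + ξ q.1‖) with hh
    have hkey : ∀ x : Fin (n + 1) → X,
        Real.cosh (l * ‖∑ i, ξ (x i)‖) = h (e x) := by
      intro x
      have hsum : ∑ i, ξ (x i) = ξ (x 0) + ∑ j : Fin n, ξ (x ((0:Fin (n+1)).succAbove j)) :=
        Fin.sum_univ_succAbove (fun i => ξ (x i)) 0
      simp only [hh, he, MeasurableEquiv.piFinSuccAbove_apply, Fin.insertNthEquiv,
        Equiv.coe_fn_symm_mk, Fin.removeNth]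
      rw [hsum, add_comm]
    have hh_sm : StronglyMeasurable h := by
      have m1 : StronglyMeasurable fun q : X × (Fin n → X) => (∑ j, ξ (q.2 j)) + ξ q.1 :=
        ((hsum_sm n).comp_measurable measurable_snd).add (hξ.comp_measurable measurable_fst)
      exact (Real.continuous_cosh.comp
        (continuous_const.mul continuous_norm)).comp_stronglyMeasurable m1
    have hh_int : Integrable h ((μ : Measure X).prod (Measure.pi fun _ : Fin n => μ)) := by
      apply aux_int_bdd hh_sm.aestronglyMeasurable (Real.cosh (l * (n * L + L)))
      intro q
      apply aux_cosh_norm_bdd hl.le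
      calc ‖(∑ j, ξ (q.2 j)) + ξ q.1‖ ≤ ‖∑ j, ξ (q.2 j)‖ + ‖ξ q.1‖ := norm_add_le _ _
        _ ≤ n * L + L := add_le_add (hsum_bdd n q.2) (hb _)
    have hstep1 : ∫ x : Fin (n+1) → X, Real.cosh (l * ‖∑ i, ξ (x i)‖)
          ∂(Measure.pi fun _ => μ)
        = ∫ q, h q ∂((μ : Measure X).prod (Measure.pi fun _ : Fin n => μ)) := by
      rw [show (fun x : Fin (n+1) → X => Real.cosh (l * ‖∑ i, ξ (x i)‖)) = fun x => h (e x)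
        from funext hkey]
      exact mp.integral_comp e.measurableEmbedding h
    have hstep2 : ∫ q, h q ∂((μ : Measure X).prod (Measure.pi fun _ : Fin n => μ))
        = ∫ z : Fin n → X, ∫ y : X, h (y, z) ∂μ ∂(Measure.pi fun _ : Fin n => μ) := by
      rw [integral_prod h hh_int]
      exact integral_integral_swap (f := fun y z => h (y, z)) hh_int
    have hinner : ∀ z : Fin n → X,
        ∫ y : X, h (y, z) ∂μ ≤ A * Real.cosh (l * ‖∑ j, ξ (z j)‖) := by
      intro z
      have := aux_step hξ hl hb hmean hv (∑ j, ξ (z j))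
      simpa [hh] using this
    have hout_int : Integrable (fun z : Fin n → X => A * Real.cosh (l * ‖∑ j, ξ (z j)‖))
        (Measure.pi fun _ : Fin n => μ) := by
      apply Integrable.const_mul
      apply aux_int_bdd (aux_cosh_norm_sm (hsum_sm n) l).aestronglyMeasurable
        (Real.cosh (l * (n * L)))
      intro z
      exact aux_cosh_norm_bdd hl.le (hsum_bdd n z)
    have hstep3 : ∫ z : Fin n → X, ∫ y : X, h (y, z) ∂μ ∂(Measure.pi fun _ : Fin n => μ)
        ≤ A * ((1 + l ^ 2 * v * Real.exp (l * L) / 2) ^ n) := by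
      have h1 : ∫ z : Fin n → X, ∫ y : X, h (y, z) ∂μ ∂(Measure.pi fun _ : Fin n => μ)
          ≤ ∫ z : Fin n → X, A * Real.cosh (l * ‖∑ j, ξ (z j)‖)
            ∂(Measure.pi fun _ : Fin n => μ) := by
        apply integral_mono_of_nonneg
        · exact Filter.Eventually.of_forall fun z =>
            integral_nonneg fun y => (Real.cosh_pos _).le
        · exact hout_int
        · exact Filter.Eventually.of_forall hinner
      rw [MeasureTheory.integral_const_mul] at h1
      calc ∫ z : Fin n → X, ∫ y : X, h (y, z) ∂μ ∂(Measure.pi fun _ : Fin n => μ)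
          ≤ A * ∫ z : Fin n → X, Real.cosh (l * ‖∑ j, ξ (z j)‖)
            ∂(Measure.pi fun _ : Fin n => μ) := h1
        _ ≤ A * ((1 + l ^ 2 * v * Real.exp (l * L) / 2) ^ n) :=
            mul_le_mul_of_nonneg_left ih hA0
    rw [hstep1, hstep2]
    calc ∫ z : Fin n → X, ∫ y : X, h (y, z) ∂μ ∂(Measure.pi fun _ : Fin n => μ)
        ≤ A * ((1 + l ^ 2 * v * Real.exp (l * L) / 2) ^ n) := hstep3
      _ = (1 + l ^ 2 * v * Real.exp (l * L) / 2) ^ (n + 1) := by rw [hA, pow_succ]; ring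


set_option maxHeartbeats 1000000 in
/-- concentration of the empirical covariance applied to a fixed `f`. With
`g(x) = ⟪Φ(x), f⟫`, i.i.d. samples modeled by the product measure on `Fin n → X`,
with probability at least `1-δ`:
`‖(1/n)∑ g(x_i)Φ(x_i) - ∫ g(x)Φ(x) dμ‖ ≤ 2κ(2‖g‖_∞/n + ‖g‖_{L²}/√n)·log(2/δ)`. -/
theorem stmt7 {X : Type*} [MeasurableSpace X] (μ : Measure X) [IsProbabilityMeasure μ]
    {H : Type*} [NormedAddCommGroup H] [InnerProductSpace ℝ H] [CompleteSpace H]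
    [TopologicalSpace.SeparableSpace H]
    (Φ : X → H) (hΦ : StronglyMeasurable Φ) (κ : ℝ) (hκ : 0 < κ)
    (hΦbound : ∀ x, ‖Φ x‖ ≤ κ) (f : H)
    (n : ℕ) (hn : 0 < n) (δ : ℝ) (hδ : δ ∈ Set.Ioo (0:ℝ) 1) :
    ENNReal.ofReal (1 - δ) ≤
      Measure.pi (fun _ : Fin n => μ)
        {x : Fin n → X |
          ‖(1 / n : ℝ) • ∑ i, ⟪Φ (x i), f⟫ • Φ (x i) - ∫ t, ⟪Φ t, f⟫ • Φ t ∂μ‖ ≤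
            2 * κ * (2 * (⨆ t : X, |⟪Φ t, f⟫|) / n +
              Real.sqrt (∫ t, ⟪Φ t, f⟫ ^ 2 ∂μ) / Real.sqrt n) * Real.log (2 / δ)} := by
  obtain ⟨hδ0, hδ1⟩ := hδ
  have hnR : (0:ℝ) < n := Nat.cast_pos.mpr hn
  have hnonempty : Nonempty X := by
    by_contra hno
    rw [not_nonempty_iff] at hno
    have h1 : μ Set.univ = 1 := measure_univ
    rw [Set.univ_eq_empty_iff.mpr hno, measure_empty] at h1
    simp at h1
  set M : ℝ := ⨆ t : X, |⟪Φ t, f⟫| with hM_def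
  set σ : ℝ := Real.sqrt (∫ t, ⟪Φ t, f⟫ ^ 2 ∂μ) with hσ_def
  set m : H := ∫ t, ⟪Φ t, f⟫ • Φ t ∂μ with hm_def
  set tt : ℝ := Real.log (2 / δ) with htt_def
  -- basic facts
  have hg_sm : StronglyMeasurable (fun x => (⟪Φ x, f⟫ : ℝ)) :=
    (continuous_id.inner continuous_const).comp_stronglyMeasurable hΦ
  have hη_sm : StronglyMeasurable (fun x => (⟪Φ x, f⟫ : ℝ) • Φ x) := hg_sm.smul hΦ
  have hBdd : BddAbove (Set.range fun t : X => |⟪Φ t, f⟫|) := by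
    refine ⟨κ * ‖f‖, ?_⟩
    rintro _ ⟨x, rfl⟩
    exact (abs_real_inner_le_norm _ _).trans
      (mul_le_mul_of_nonneg_right (hΦbound x) (norm_nonneg f))
  have hgM : ∀ x, |⟪Φ x, f⟫| ≤ M := fun x => le_ciSup hBdd x
  have hM0 : 0 ≤ M := le_trans (abs_nonneg _) (hgM (Classical.arbitrary X))
  have hσ0 : 0 ≤ σ := Real.sqrt_nonneg _
  have hσ_sq : σ ^ 2 = ∫ t, ⟪Φ t, f⟫ ^ 2 ∂μ :=
    Real.sq_sqrt (integral_nonneg fun t => sq_nonneg _)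
  have htt_half : 1 / 2 < tt := by
    have h1 : Real.log 2 ≤ tt := by
      rw [htt_def, Real.log_div two_ne_zero (ne_of_gt hδ0)]
      have := Real.log_neg hδ0 hδ1
      linarith
    linarith [Real.log_two_gt_d9]
  have htt_pos : 0 < tt := by linarith
  have hexp_tt : Real.exp (-tt) = δ / 2 := by
    rw [htt_def, Real.exp_neg, Real.exp_log (by positivity)]
    field_simp
  have hηb : ∀ x, ‖(⟪Φ x, f⟫ : ℝ) • Φ x‖ ≤ M * κ := by
    intro x
    rw [norm_smul, Real.norm_eq_abs]
    exact mul_le_mul (hgM x) (hΦbound x) (norm_nonneg _) hM0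
  have hη_int : Integrable (fun x => (⟪Φ x, f⟫ : ℝ) • Φ x) μ :=
    aux_int_bdd hη_sm.aestronglyMeasurable (M * κ) hηb
  have hm_bdd : ‖m‖ ≤ M * κ := by
    rw [hm_def]
    calc ‖∫ t, (⟪Φ t, f⟫ : ℝ) • Φ t ∂μ‖ ≤ ∫ t, ‖(⟪Φ t, f⟫ : ℝ) • Φ t‖ ∂μ :=
          norm_integral_le_integral_norm _
      _ ≤ ∫ _t : X, M * κ ∂μ := integral_mono hη_int.norm (integrable_const _)
          (fun x => hηb x)
      _ = M * κ := by simp [measure_univ]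
  set ξ : X → H := fun x => (⟪Φ x, f⟫ : ℝ) • Φ x - m with hξ_def
  have hξ_sm : StronglyMeasurable ξ := hη_sm.sub stronglyMeasurable_const
  set L : ℝ := 2 * (M * κ) with hL_def
  have hL0 : 0 ≤ L := by positivity
  have hξb : ∀ x, ‖ξ x‖ ≤ L := by
    intro x
    calc ‖ξ x‖ ≤ ‖(⟪Φ x, f⟫ : ℝ) • Φ x‖ + ‖m‖ := norm_sub_le _ _
      _ ≤ M * κ + M * κ := add_le_add (hηb x) hm_bdd
      _ = L := by rw [hL_def]; ring
  have hmean : ∫ x, ξ x ∂μ = 0 := by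
    rw [hξ_def]
    rw [integral_sub hη_int (integrable_const m), integral_const]
    simp [measure_univ, ← hm_def]
  -- variance bound
  set v : ℝ := κ ^ 2 * σ ^ 2 with hv_def
  have hv0 : 0 ≤ v := by positivity
  have hsm2 : StronglyMeasurable (fun x : X => ‖(⟪Φ x, f⟫ : ℝ) • Φ x‖ ^ 2) := by
    exact ((continuous_pow 2).comp continuous_norm).comp_stronglyMeasurable hη_sm
  have hη2_int : Integrable (fun x => ‖(⟪Φ x, f⟫ : ℝ) • Φ x‖ ^ 2) μ := by
    apply aux_int_bdd hsm2.aestronglyMeasurable ((M * κ) ^ 2)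
    intro x
    rw [Real.norm_eq_abs, abs_of_nonneg (by positivity)]
    nlinarith [hηb x, norm_nonneg ((⟪Φ x, f⟫ : ℝ) • Φ x)]
  have hinner_m_int : Integrable (fun x => (⟪(⟪Φ x, f⟫ : ℝ) • Φ x, m⟫ : ℝ)) μ :=
    hη_int.inner_const m
  have hsmg2 : StronglyMeasurable (fun x : X => (⟪Φ x, f⟫ : ℝ) ^ 2) := by
    exact (continuous_pow 2).comp_stronglyMeasurable hg_sm
  have hg2_int : Integrable (fun x => (⟪Φ x, f⟫ : ℝ) ^ 2) μ := by
    apply aux_int_bdd hsmg2.aestronglyMeasurable (M ^ 2)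
    intro x
    rw [Real.norm_eq_abs, abs_of_nonneg (by positivity)]
    nlinarith [hgM x, abs_nonneg (⟪Φ x, f⟫ : ℝ), neg_abs_le (⟪Φ x, f⟫ : ℝ), le_abs_self (⟪Φ x, f⟫ : ℝ)]
  have hinner_val : ∫ x, (⟪(⟪Φ x, f⟫ : ℝ) • Φ x, m⟫ : ℝ) ∂μ = ‖m‖ ^ 2 := by
    have heq : (fun x => (⟪(⟪Φ x, f⟫ : ℝ) • Φ x, m⟫ : ℝ))
        = fun x => (⟪m, (⟪Φ x, f⟫ : ℝ) • Φ x⟫ : ℝ) := funext fun x => real_inner_comm _ _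
    rw [heq, integral_inner hη_int m, ← hm_def, real_inner_self_eq_norm_sq]
  have hvar : ∫ x, ‖ξ x‖ ^ 2 ∂μ ≤ v := by
    have hpt : ∀ x, ‖ξ x‖ ^ 2 = ‖(⟪Φ x, f⟫ : ℝ) • Φ x‖ ^ 2
        - 2 * (⟪(⟪Φ x, f⟫ : ℝ) • Φ x, m⟫ : ℝ) + ‖m‖ ^ 2 := by
      intro x
      rw [hξ_def]
      exact norm_sub_sq_real _ _
    have hstep : ∫ x, ‖ξ x‖ ^ 2 ∂μ = (∫ x, ‖(⟪Φ x, f⟫ : ℝ) • Φ x‖ ^ 2 ∂μ) - ‖m‖ ^ 2 := by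
      simp only [hpt]
      have i1 : Integrable (fun x => ‖(⟪Φ x, f⟫ : ℝ) • Φ x‖ ^ 2
          - 2 * (⟪(⟪Φ x, f⟫ : ℝ) • Φ x, m⟫ : ℝ)) μ := by
        exact hη2_int.sub (hinner_m_int.const_mul 2)
      rw [integral_add i1 (integrable_const _),
        integral_sub hη2_int (hinner_m_int.const_mul 2), MeasureTheory.integral_const_mul,
        hinner_val, integral_const]
      simp [measure_univ]
      ring
    have hη2_le : ∫ x, ‖(⟪Φ x, f⟫ : ℝ) • Φ x‖ ^ 2 ∂μ ≤ v := by
      have h1 : ∫ x, ‖(⟪Φ x, f⟫ : ℝ) • Φ x‖ ^ 2 ∂μ ≤ ∫ x, κ ^ 2 * (⟪Φ x, f⟫ : ℝ) ^ 2 ∂μ := by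
        apply integral_mono hη2_int (hg2_int.const_mul _)
        intro x
        show ‖(⟪Φ x, f⟫ : ℝ) • Φ x‖ ^ 2 ≤ κ ^ 2 * (⟪Φ x, f⟫ : ℝ) ^ 2
        rw [norm_smul, Real.norm_eq_abs]
        have h2 : ‖Φ x‖ ≤ κ := hΦbound x
        have h3 : 0 ≤ ‖Φ x‖ := norm_nonneg _
        calc (|(⟪Φ x, f⟫ : ℝ)| * ‖Φ x‖) ^ 2
            = |(⟪Φ x, f⟫ : ℝ)| ^ 2 * ‖Φ x‖ ^ 2 := by ring
          _ ≤ |(⟪Φ x, f⟫ : ℝ)| ^ 2 * κ ^ 2 :=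
              mul_le_mul_of_nonneg_left (by nlinarith) (sq_nonneg _)
          _ = κ ^ 2 * (⟪Φ x, f⟫ : ℝ) ^ 2 := by rw [sq_abs]; ring
      rw [MeasureTheory.integral_const_mul] at h1
      rw [hv_def, hσ_sq]
      exact h1
    nlinarith [hstep, hη2_le, sq_nonneg ‖m‖]
  -- the target radius
  set ε : ℝ := 2 * κ * (2 * M / n + σ / Real.sqrt n) * tt with hε_def
  have hε0 : 0 ≤ ε := by
    rw [hε_def]
    apply mul_nonneg (mul_nonneg (by positivity) _) htt_pos.le
    exact add_nonneg (div_nonneg (by positivity) hnR.le)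
      (div_nonneg hσ0 (Real.sqrt_nonneg _))
  by_cases hMpos : M = 0
  · -- degenerate case: g ≡ 0
    have hg0 : ∀ x, (⟪Φ x, f⟫ : ℝ) = 0 := by
      intro x
      have := hgM x
      rw [hMpos] at this
      exact abs_eq_zero.mp (le_antisymm this (abs_nonneg _))
    have hm0 : m = 0 := by
      rw [hm_def]
      simp only [hg0, zero_smul, integral_zero]
    have hsetuniv : {x : Fin n → X |
        ‖(1 / n : ℝ) • ∑ i, (⟪Φ (x i), f⟫ : ℝ) • Φ (x i) - m‖ ≤ ε} = Set.univ := by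
      ext x
      simp only [Set.mem_setOf_eq, Set.mem_univ, iff_true, hg0, zero_smul,
        Finset.sum_const_zero, smul_zero, hm0, sub_zero, norm_zero]
      exact hε0
    rw [hsetuniv]
    simp only [measure_univ]
    exact ENNReal.ofReal_le_one.mpr (by linarith)
  -- main case
  have hMpos' : 0 < M := lt_of_le_of_ne hM0 (Ne.symm hMpos)
  set D : ℝ := L + κ * σ * Real.sqrt n with hD_def
  have hD : 0 < D := by
    rw [hD_def, hL_def]
    have : 0 ≤ κ * σ * Real.sqrt n := by positivity
    nlinarith
  set l : ℝ := D⁻¹ with hl_def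
  have hl : 0 < l := by rw [hl_def]; exact inv_pos.mpr hD
  set A : ℝ := 1 + l ^ 2 * v * Real.exp (l * L) / 2 with hA_def
  have hA0 : 0 ≤ A := by positivity
  have hiter := aux_iter hξ_sm hl hL0 hv0 hξb hmean hvar n
  -- Chernoff exponent bound : A ^ n ≤ exp (1/2)
  have hAn : A ^ n ≤ Real.exp (1 / 2) := by
    set β : ℝ := l ^ 2 * v * Real.exp (l * L) / 2 with hβ_def
    have hβ0 : 0 ≤ β := by positivity
    have h1 : A ≤ Real.exp β := by
      have := Real.add_one_le_exp β
      rw [hA_def]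
      linarith
    have h2 : A ^ n ≤ Real.exp β ^ n := pow_le_pow_left₀ hA0 h1 n
    have h3 : Real.exp β ^ n = Real.exp (n * β) := by
      rw [← Real.exp_nat_mul]
    have hsq : Real.sqrt n ^ 2 = (n : ℝ) := Real.sq_sqrt (Nat.cast_nonneg n)
    set θ : ℝ := κ * σ * Real.sqrt n / D with hθ_def
    have hθ0 : 0 ≤ θ := by positivity
    have hθ1 : θ ≤ 1 := by
      rw [hθ_def, div_le_one hD, hD_def]
      linarith [hL0]
    have hlL : l * L = 1 - θ := by
      rw [hl_def, hθ_def, hD_def]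
      have hD' : L + κ * σ * Real.sqrt n ≠ 0 := hD.ne'
      field_simp
      ring
    have hn_l2v : (n : ℝ) * (l ^ 2 * v) = θ ^ 2 := by
      rw [hl_def, hθ_def, hv_def]
      rw [div_pow, mul_pow, mul_pow, hsq]
      field_simp
    have hθe : θ * Real.exp (1 - θ) ≤ 1 := by
      have h4 : θ ≤ Real.exp (θ - 1) := by
        have := Real.add_one_le_exp (θ - 1)
        linarith
      calc θ * Real.exp (1 - θ) ≤ Real.exp (θ - 1) * Real.exp (1 - θ) :=
            mul_le_mul_of_nonneg_right h4 (Real.exp_pos _).le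
        _ = 1 := by rw [← Real.exp_add]; norm_num
    have hnβ : (n : ℝ) * β ≤ 1 / 2 := by
      have h5 : (n : ℝ) * β = θ ^ 2 * Real.exp (1 - θ) / 2 := by
        rw [hβ_def, hlL, ← hn_l2v]
        ring
      rw [h5]
      have h6 : θ ^ 2 * Real.exp (1 - θ) ≤ θ := by
        calc θ ^ 2 * Real.exp (1 - θ) = θ * (θ * Real.exp (1 - θ)) := by ring
          _ ≤ θ * 1 := mul_le_mul_of_nonneg_left hθe hθ0
          _ = θ := mul_one θ
      linarith [h6, hθ1]
    calc A ^ n ≤ Real.exp β ^ n := h2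
      _ = Real.exp (n * β) := h3
      _ ≤ Real.exp (1 / 2) := Real.exp_le_exp.mpr hnβ
  -- relation l * (n * ε) = 2 * tt
  have hsn_pos : 0 < Real.sqrt n := Real.sqrt_pos.mpr hnR
  have hnε : (n : ℝ) * ε = 2 * tt * D := by
    have e1 : (n : ℝ) ≠ 0 := ne_of_gt hnR
    have h1 : (n : ℝ) / (n : ℝ) = 1 := div_self e1
    have hdiv : (n : ℝ) / Real.sqrt n = Real.sqrt n := Real.div_sqrt
    have expand : (n : ℝ) * ε
        = 2 * κ * tt * (2 * M * ((n : ℝ) / (n : ℝ)))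
          + 2 * κ * tt * (σ * ((n : ℝ) / Real.sqrt n)) := by
      rw [hε_def]; ring
    rw [expand, h1, hdiv, hD_def, hL_def]
    ring
  have hlnε : l * ((n : ℝ) * ε) = 2 * tt := by
    rw [hnε, hl_def]
    field_simp
  -- Markov / Chernoff tail bound
  set π := Measure.pi (fun _ : Fin n => μ) with hπ_def
  set F : (Fin n → X) → ℝ := fun x => Real.cosh (l * ‖∑ i, ξ (x i)‖) with hF_def
  have hsum_sm : StronglyMeasurable (fun z : Fin n → X => ∑ i, ξ (z i)) :=
    Finset.stronglyMeasurable_fun_sum Finset.univ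
      (fun i _ => hξ_sm.comp_measurable (measurable_pi_apply i))
  have hsum_bdd : ∀ z : Fin n → X, ‖∑ i, ξ (z i)‖ ≤ n * L := by
    intro z
    calc ‖∑ i, ξ (z i)‖ ≤ ∑ i : Fin n, ‖ξ (z i)‖ := norm_sum_le _ _
      _ ≤ ∑ _i : Fin n, L := Finset.sum_le_sum fun i _ => hξb _
      _ = n * L := by simp [Finset.sum_const, nsmul_eq_mul]
  have hF_int : Integrable F π := by
    apply aux_int_bdd (aux_cosh_norm_sm hsum_sm l).aestronglyMeasurable
      (Real.cosh (l * (n * L)))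
    intro z
    exact aux_cosh_norm_bdd hl.le (hsum_bdd z)
  set c : ℝ := Real.cosh (l * ((n : ℝ) * ε)) with hc_def
  have hc_pos : 0 < c := Real.cosh_pos _
  have hc_ge : Real.exp (2 * tt) / 2 ≤ c := by
    rw [hc_def, hlnε, Real.cosh_eq]
    have := Real.exp_pos (-(2 * tt))
    linarith
  -- event and complement
  set E : Set (Fin n → X) := {x : Fin n → X |
      ‖(1 / n : ℝ) • ∑ i, (⟪Φ (x i), f⟫ : ℝ) • Φ (x i) - m‖ ≤ ε} with hE_def
  have hW_sm : StronglyMeasurable (fun x : Fin n → X =>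
      ‖(1 / n : ℝ) • ∑ i, (⟪Φ (x i), f⟫ : ℝ) • Φ (x i) - m‖) := by
    apply StronglyMeasurable.norm
    apply StronglyMeasurable.sub _ stronglyMeasurable_const
    apply StronglyMeasurable.const_smul
    exact Finset.stronglyMeasurable_fun_sum Finset.univ
      (fun i _ => (hg_sm.comp_measurable (measurable_pi_apply i)).smul
        (hΦ.comp_measurable (measurable_pi_apply i)))
  have hE_meas : MeasurableSet E := measurableSet_le hW_sm.measurable measurable_const
  have hsub : Eᶜ ⊆ {x : Fin n → X | c ≤ F x} := by
    intro x hx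
    simp only [hE_def, Set.mem_compl_iff, Set.mem_setOf_eq, not_le] at hx
    have hsumeq : ∑ i, ξ (x i)
        = (n : ℝ) • ((1 / n : ℝ) • (∑ i, (⟪Φ (x i), f⟫ : ℝ) • Φ (x i)) - m) := by
      rw [smul_sub, smul_smul]
      rw [mul_one_div, div_self (ne_of_gt hnR), one_smul]
      simp only [hξ_def]
      rw [Finset.sum_sub_distrib, Finset.sum_const, Finset.card_univ, Fintype.card_fin,
        Nat.cast_smul_eq_nsmul]
    have hnorm : ‖∑ i, ξ (x i)‖
        = (n : ℝ) * ‖(1 / n : ℝ) • (∑ i, (⟪Φ (x i), f⟫ : ℝ) • Φ (x i)) - m‖ := by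
      rw [hsumeq, norm_smul, Real.norm_natCast]
    simp only [Set.mem_setOf_eq, hF_def, hc_def]
    rw [Real.cosh_le_cosh]
    have h6 : 0 ≤ l * ((n : ℝ) * ε) := by positivity
    have h7 : (n : ℝ) * ε ≤ ‖∑ i, ξ (x i)‖ := by
      rw [hnorm]
      apply mul_le_mul_of_nonneg_left _ hnR.le
      exact le_of_lt hx
    rw [abs_of_nonneg h6, abs_of_nonneg (by positivity)]
    exact mul_le_mul_of_nonneg_left h7 hl.le
  -- Markov
  have hmar := mul_meas_ge_le_integral_of_nonneg
    (Filter.Eventually.of_forall fun x : Fin n → X => (Real.cosh_pos _).le) hF_int c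
  have htail : (π {x : Fin n → X | c ≤ F x}).toReal ≤ A ^ n / c := by
    rw [le_div_iff₀ hc_pos]
    calc (π {x | c ≤ F x}).toReal * c = c * (π {x | c ≤ F x}).toReal := mul_comm _ _
      _ ≤ ∫ x, F x ∂π := hmar
      _ ≤ A ^ n := hiter
  have hcompl_le : (π Eᶜ).toReal ≤ A ^ n / c := by
    refine le_trans ?_ htail
    apply ENNReal.toReal_mono (measure_ne_top π _)
    exact measure_mono hsub
  have hAnc : A ^ n / c ≤ δ := by
    have h8 : A ^ n / c ≤ Real.exp (1 / 2) / (Real.exp (2 * tt) / 2) := by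
      apply div_le_div₀ (Real.exp_pos _).le hAn (by positivity) hc_ge
    have h9 : Real.exp (1 / 2) / (Real.exp (2 * tt) / 2) = 2 * Real.exp (1 / 2 - 2 * tt) := by
      rw [Real.exp_sub]
      field_simp
    have h10 : Real.exp (1 / 2 - 2 * tt) ≤ Real.exp (-tt) :=
      Real.exp_le_exp.mpr (by linarith)
    calc A ^ n / c ≤ 2 * Real.exp (1 / 2 - 2 * tt) := by rw [← h9]; exact h8
      _ ≤ 2 * Real.exp (-tt) := by linarith
      _ = δ := by rw [hexp_tt]; ring
  have hfinal : π Eᶜ ≤ ENNReal.ofReal δ := by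
    have h11 : π Eᶜ = ENNReal.ofReal ((π Eᶜ).toReal) :=
      (ENNReal.ofReal_toReal (measure_ne_top π _)).symm
    rw [h11]
    exact ENNReal.ofReal_le_ofReal (le_trans hcompl_le hAnc)
  -- conclude
  have hgoal : ENNReal.ofReal (1 - δ) ≤ π E := by
    have h12 : π Eᶜ = 1 - π E := prob_compl_eq_one_sub hE_meas
    have h13 : (1:ENNReal) - π E ≤ ENNReal.ofReal δ := h12 ▸ hfinal
    have h14 : (1:ENNReal) ≤ ENNReal.ofReal δ + π E := by
      rw [← tsub_le_iff_right]
      exact h13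
    have h15 : ENNReal.ofReal (1 - δ) = 1 - ENNReal.ofReal δ := by
      rw [ENNReal.ofReal_sub 1 hδ0.le, ENNReal.ofReal_one]
    rw [h15, tsub_le_iff_right]
    rw [add_comm]
    exact h14
  exact hgoal
end

section
/- Let H be a separable complex Hilbert space and let A, B be bounded positive (self-adjoint, nonnegative) linear operators on H. Then for every s ∈ [0,1], ‖A^s B^s‖ ≤ ‖AB‖^s, where A^s and B^s are the fractional powers defined by the continuous functional calculus and ‖·‖ is the operator norm. -/
open Filter Topology

section Aux

lemma contRpowAux {u : ℝ} (hu : 0 ≤ u) : Continuous fun t : ℝ => t ^ u :=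
  continuous_iff_continuousAt.2 fun x => Real.continuousAt_rpow_const x u (Or.inr hu)

variable {E : Type*} [CStarAlgebra E] [PartialOrder E] [StarOrderedRing E]

noncomputable def cpowAux (a : E) (u : ℝ) : E := cfc (fun t : ℝ => t ^ u) a

lemma cpowAux_sa (a : E) (u : ℝ) : IsSelfAdjoint (cpowAux a u) := cfc_predicate _ a

lemma cpowAux_mul (a : E) (ha : 0 ≤ a) {u v : ℝ} (hu : 0 ≤ u) (hv : 0 ≤ v) :
    cpowAux a u * cpowAux a v = cpowAux a (u + v) := by
  rw [cpowAux, cpowAux, cpowAux,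
    ← cfc_mul _ _ a (contRpowAux hu).continuousOn (contRpowAux hv).continuousOn]
  apply cfc_congr
  intro t ht
  have ht0 : 0 ≤ t := spectrum_nonneg_of_nonneg ha ht
  rcases eq_or_lt_of_le hu with rfl | hu'
  · simp [Real.rpow_zero]
  · rcases eq_or_lt_of_le hv with rfl | hv'
    · simp [Real.rpow_zero]
    · exact (Real.rpow_add' ht0 (by positivity)).symm

lemma cpowAux_zero (a : E) (ha : IsSelfAdjoint a) : cpowAux a 0 = 1 := by
  rw [cpowAux, show (fun t : ℝ => t ^ (0:ℝ)) = fun _ : ℝ => (1:ℝ) from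
    funext fun t => Real.rpow_zero t]
  exact cfc_const_one ℝ a

lemma cpowAux_one (a : E) (ha : IsSelfAdjoint a) : cpowAux a 1 = a := by
  rw [cpowAux, show (fun t : ℝ => t ^ (1:ℝ)) = fun t : ℝ => t from
    funext fun t => Real.rpow_one t]
  exact cfc_id' ℝ a

lemma srAux_comm (a b : E) : spectralRadius ℂ (a * b) = spectralRadius ℂ (b * a) := by
  have h := spectrum.nonzero_mul_comm (𝕜 := ℂ) a b
  have key : ∀ c : E, spectralRadius ℂ c = ⨆ k ∈ (spectrum ℂ c) \ {0}, (‖k‖₊ : ENNReal) := by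
    intro c
    rw [spectralRadius]
    apply le_antisymm
    · apply iSup₂_le; intro k hk
      rcases eq_or_ne k 0 with rfl | hne
      · simp
      · exact le_iSup₂ (f := fun k (_ : k ∈ spectrum ℂ c \ {0}) => (‖k‖₊ : ENNReal)) k ⟨hk, hne⟩
    · exact iSup₂_le fun k hk =>
        le_iSup₂ (f := fun k (_ : k ∈ spectrum ℂ c) => (‖k‖₊ : ENNReal)) k hk.1
  rw [key, key, h]

lemma nnnormAux_swap (x y : E) (hx : IsSelfAdjoint x) (hy : IsSelfAdjoint y) :
    ‖y * x‖₊ = ‖x * y‖₊ := by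
  conv_lhs => rw [show y * x = star (x * y) by rw [star_mul, hx.star_eq, hy.star_eq]]
  rw [nnnorm_star]

open NNReal in
lemma midpointAux [NormOneClass E] (a b : E) (ha : 0 ≤ a) (hb : 0 ≤ b) {N : ℝ≥0} {r t : ℝ}
    (hr : 0 ≤ r) (ht : 0 ≤ t)
    (h1 : ‖cpowAux a r * cpowAux b r‖₊ ≤ N ^ r) (h2 : ‖cpowAux a t * cpowAux b t‖₊ ≤ N ^ t) :
    ‖cpowAux a ((r + t) / 2) * cpowAux b ((r + t) / 2)‖₊ ≤ N ^ ((r + t) / 2) := by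
  rcases eq_or_lt_of_le (add_nonneg hr ht) with h0 | h0
  · have hrt : (r + t) / 2 = 0 := by rw [← h0]; norm_num
    rw [hrt, cpowAux_zero a ha.isSelfAdjoint, cpowAux_zero b hb.isSelfAdjoint, mul_one,
      NNReal.rpow_zero, nnnorm_one]
  · set s := (r + t) / 2 with hs_def
    have hs : 0 < s := by positivity
    set X := cpowAux a s * cpowAux b s with hX
    have hstar : star X = cpowAux b s * cpowAux a s := by
      rw [hX, star_mul, (cpowAux_sa b s).star_eq, (cpowAux_sa a s).star_eq]
    have haa : cpowAux a s * cpowAux a s = cpowAux a (r + t) := by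
      rw [cpowAux_mul a ha hs.le hs.le]; congr 1; rw [hs_def]; ring
    have hbb : cpowAux b s * cpowAux b s = cpowAux b (r + t) := by
      rw [cpowAux_mul b hb hs.le hs.le]; congr 1; rw [hs_def]; ring
    have key : star X * X = cpowAux b s * (cpowAux a (r + t) * cpowAux b s) := by
      rw [hstar, hX, mul_assoc, ← mul_assoc (cpowAux a s), haa]
    have hXX_sa : IsSelfAdjoint (star X * X) := IsSelfAdjoint.star_mul_self X
    have hsplit_a : cpowAux a (r + t) = cpowAux a t * cpowAux a r := by
      rw [cpowAux_mul a ha ht hr]; congr 1; ring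
    have hsplit_b : cpowAux b (r + t) = cpowAux b r * cpowAux b t := by
      rw [cpowAux_mul b hb hr ht]
    have chain : (‖star X * X‖₊ : ENNReal) ≤
        (‖cpowAux a r * cpowAux b r‖₊ * ‖cpowAux a t * cpowAux b t‖₊ : ℝ≥0) := by
      calc (‖star X * X‖₊ : ENNReal) = spectralRadius ℂ (star X * X) :=
            hXX_sa.spectralRadius_eq_nnnorm.symm
        _ = spectralRadius ℂ ((cpowAux a (r + t) * cpowAux b s) * cpowAux b s) := by
            rw [key, srAux_comm]
        _ = spectralRadius ℂ (cpowAux a (r + t) * cpowAux b (r + t)) := by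
            rw [mul_assoc, hbb]
        _ = spectralRadius ℂ (cpowAux a t * (cpowAux a r * cpowAux b r * cpowAux b t)) := by
            rw [hsplit_a, hsplit_b]; congr 1; noncomm_ring
        _ = spectralRadius ℂ ((cpowAux a r * cpowAux b r * cpowAux b t) * cpowAux a t) :=
            srAux_comm _ _
        _ ≤ (‖cpowAux a r * cpowAux b r * cpowAux b t * cpowAux a t‖₊ : ENNReal) :=
            spectrum.spectralRadius_le_nnnorm _
        _ ≤ (‖cpowAux a r * cpowAux b r‖₊ * ‖cpowAux b t * cpowAux a t‖₊ : ℝ≥0) := by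
            rw [mul_assoc]
            exact_mod_cast ENNReal.coe_le_coe.mpr (nnnorm_mul_le _ _)
        _ = (‖cpowAux a r * cpowAux b r‖₊ * ‖cpowAux a t * cpowAux b t‖₊ : ℝ≥0) := by
            rw [nnnormAux_swap _ _ (cpowAux_sa a t) (cpowAux_sa b t)]
    have main : ‖star X * X‖₊ ≤ ‖cpowAux a r * cpowAux b r‖₊ * ‖cpowAux a t * cpowAux b t‖₊ :=
      ENNReal.coe_le_coe.mp chain
    have hXsq : ‖X‖₊ * ‖X‖₊ = ‖star X * X‖₊ := (CStarRing.nnnorm_star_mul_self).symm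
    have hNN : N ^ r * N ^ t = N ^ s * N ^ s := by
      rw [← NNReal.rpow_add' (x := N) (show r + t ≠ 0 from ne_of_gt h0),
        ← NNReal.rpow_add' (x := N) (show s + s ≠ 0 by positivity)]
      congr 1
      rw [hs_def]; ring
    have hfinal : ‖X‖₊ * ‖X‖₊ ≤ N ^ s * N ^ s := by
      rw [hXsq, ← hNN]
      exact main.trans (mul_le_mul' h1 h2)
    by_contra hcon
    push_neg at hcon
    exact absurd hfinal (not_le.mpr (mul_lt_mul'' hcon hcon zero_le zero_le))

open NNReal in
lemma dyadicAux [NormOneClass E] (a b : E) (ha : 0 ≤ a) (hb : 0 ≤ b) :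
    ∀ n k : ℕ, k ≤ 2 ^ n →
      ‖cpowAux a ((k : ℝ) / 2 ^ n) * cpowAux b ((k : ℝ) / 2 ^ n)‖₊ ≤
        ‖a * b‖₊ ^ ((k : ℝ) / 2 ^ n) := by
  intro n
  induction n with
  | zero =>
    intro k hk
    interval_cases k
    · norm_num
      rw [cpowAux_zero a ha.isSelfAdjoint, cpowAux_zero b hb.isSelfAdjoint, mul_one, nnnorm_one]
    · norm_num
      rw [cpowAux_one a ha.isSelfAdjoint, cpowAux_one b hb.isSelfAdjoint]
  | succ n ih =>
    intro k hk
    rcases Nat.even_or_odd k with ⟨j, hj⟩ | ⟨j, hj⟩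
    · subst hj
      have hj2 : j ≤ 2 ^ n := by rw [pow_succ] at hk; omega
      have hcast : ((j + j : ℕ) : ℝ) / 2 ^ (n + 1) = (j : ℝ) / 2 ^ n := by
        push_cast; ring
      rw [hcast]
      exact ih j hj2
    · subst hj
      have h1 : j ≤ 2 ^ n := by rw [pow_succ] at hk; omega
      have h2 : j + 1 ≤ 2 ^ n := by rw [pow_succ] at hk; omega
      have hcast : ((2 * j + 1 : ℕ) : ℝ) / 2 ^ (n + 1) =
          ((j : ℝ) / 2 ^ n + ((j + 1 : ℕ) : ℝ) / 2 ^ n) / 2 := by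
        push_cast; ring
      rw [hcast]
      exact midpointAux a b ha hb (by positivity) (by positivity) (ih j h1) (ih (j + 1) h2)

lemma cpowAux_tendsto [NormOneClass E] (a : E) (ha : 0 ≤ a) {s : ℝ} (hs : 0 < s) {q : ℕ → ℝ}
    (hq : Tendsto q atTop (𝓝 s)) (hq' : ∀ n, 0 < q n) :
    Tendsto (fun n => cpowAux a (q n)) atTop (𝓝 (cpowAux a s)) := by
  rw [Metric.tendsto_atTop]
  intro ε hε
  set K : Set (ℝ × ℝ) := Set.Icc 0 ‖a‖ ×ˢ Set.Icc (s / 2) (s + 1) with hK_def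
  have hK : IsCompact K := isCompact_Icc.prod isCompact_Icc
  have hg : ContinuousOn (fun p : ℝ × ℝ => p.1 ^ p.2) K := by
    intro p hp
    exact (Real.continuousAt_rpow p (Or.inr (lt_of_lt_of_le (half_pos hs) hp.2.1))).continuousWithinAt
  have hu := hK.uniformContinuousOn_of_continuous hg
  rw [Metric.uniformContinuousOn_iff] at hu
  obtain ⟨δ, hδ, hδ'⟩ := hu (ε / 2) (half_pos hε)
  have hev : ∀ᶠ n in atTop, |q n - s| < min δ (min (s / 2) 1) := by
    have := Metric.tendsto_nhds.mp hq (min δ (min (s / 2) 1))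
      (by positivity)
    filter_upwards [this] with n hn
    rwa [Real.dist_eq] at hn
  obtain ⟨Nn, hNn⟩ := Filter.eventually_atTop.mp hev
  refine ⟨Nn, fun n hn => ?_⟩
  have hqmem : q n ∈ Set.Icc (s / 2) (s + 1) := by
    have hm := abs_lt.mp ((hNn n hn).trans_le (min_le_right _ _))
    have hm1 : min (s / 2) 1 ≤ s / 2 := min_le_left _ _
    have hm2 : min (s / 2) 1 ≤ (1 : ℝ) := min_le_right _ _
    constructor
    · linarith [hm.1]
    · linarith [hm.2]
  have hcq : Continuous fun t : ℝ => t ^ q n := contRpowAux (hq' n).le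
  have hcs : Continuous fun t : ℝ => t ^ s := contRpowAux hs.le
  have hsub : cpowAux a (q n) - cpowAux a s = cfc (fun t : ℝ => t ^ q n - t ^ s) a := by
    rw [cpowAux, cpowAux, cfc_sub _ _ a hcq.continuousOn hcs.continuousOn]
  rw [dist_eq_norm, hsub]
  have hb : ‖cfc (fun t : ℝ => t ^ q n - t ^ s) a‖ ≤ ε / 2 := by
    apply norm_cfc_le (le_of_lt (half_pos hε))
    intro x hx
    have hx0 : 0 ≤ x := spectrum_nonneg_of_nonneg ha hx
    have hx1 : x ≤ ‖a‖ := by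
      have h := spectrum.norm_le_norm_of_mem hx
      rw [Real.norm_eq_abs] at h
      exact (le_abs_self x).trans h
    have hmem1 : ((x, q n) : ℝ × ℝ) ∈ K := ⟨⟨hx0, hx1⟩, hqmem⟩
    have hmem2 : ((x, s) : ℝ × ℝ) ∈ K :=
      ⟨⟨hx0, hx1⟩, ⟨by linarith [half_pos hs], by linarith⟩⟩
    have hd : dist ((x, q n) : ℝ × ℝ) (x, s) < δ := by
      rw [Prod.dist_eq]
      apply max_lt (by simpa using hδ)
      rw [Real.dist_eq]
      exact (hNn n hn).trans_le (min_le_left _ _)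
    have := hδ' _ hmem1 _ hmem2 hd
    rw [Real.dist_eq] at this
    rw [Real.norm_eq_abs]
    exact this.le
  linarith

end Aux

/-- Cordes' inequality: for bounded positive operators `A, B` on a separable
complex Hilbert space and `s ∈ [0,1]`, `‖A^s B^s‖ ≤ ‖AB‖^s`, where fractional powers are
taken via the continuous functional calculus. -/
theorem stmt14 {H : Type*} [NormedAddCommGroup H] [InnerProductSpace ℂ H] [CompleteSpace H]
    [TopologicalSpace.SeparableSpace H]
    (A B : H →L[ℂ] H) (hA : A.IsPositive) (hB : B.IsPositive)
    (s : ℝ) (hs : s ∈ Set.Icc (0:ℝ) 1) :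
    ‖cfc (fun t : ℝ => t ^ s) A * cfc (fun t : ℝ => t ^ s) B‖ ≤ ‖A * B‖ ^ s := by
  rcases subsingleton_or_nontrivial H with hH | hH
  · have h0 : ∀ X : H →L[ℂ] H, X = 0 := fun X => Subsingleton.elim _ _
    rw [h0 (cfc (fun t : ℝ => t ^ s) A * cfc (fun t : ℝ => t ^ s) B), h0 (A * B), norm_zero]
    exact Real.rpow_nonneg le_rfl s
  · have ha : (0 : H →L[ℂ] H) ≤ A := (ContinuousLinearMap.nonneg_iff_isPositive A).mpr hA
    have hb : (0 : H →L[ℂ] H) ≤ B := (ContinuousLinearMap.nonneg_iff_isPositive B).mpr hB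
    obtain ⟨hs0, hs1⟩ := hs
    rcases eq_or_lt_of_le hs0 with rfl | hs0'
    · show ‖cpowAux A 0 * cpowAux B 0‖ ≤ _
      rw [cpowAux_zero A hA.isSelfAdjoint, cpowAux_zero B hB.isSelfAdjoint, mul_one,
        Real.rpow_zero, norm_one]
    · set q : ℕ → ℝ := fun n => (⌈s * 2 ^ n⌉₊ : ℝ) / 2 ^ n with hq_def
      have hql : ∀ n, s ≤ q n := by
        intro n
        rw [hq_def, le_div_iff₀ (by positivity)]
        exact Nat.le_ceil _
      have hqu : ∀ n, q n ≤ s + (1 / 2 : ℝ) ^ n := by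
        intro n
        rw [hq_def, div_le_iff₀ (by positivity)]
        have h2n : (2 : ℝ) ^ n ≠ 0 := by positivity
        calc (⌈s * 2 ^ n⌉₊ : ℝ) ≤ s * 2 ^ n + 1 := (Nat.ceil_lt_add_one (by positivity)).le
          _ = (s + (1 / 2 : ℝ) ^ n) * 2 ^ n := by
              rw [add_mul, div_pow, one_pow, one_div_mul_cancel h2n]
      have hq_tend : Tendsto q atTop (𝓝 s) := by
        have hlim : Tendsto (fun n : ℕ => s + (1 / 2 : ℝ) ^ n) atTop (𝓝 (s + 0)) :=
          tendsto_const_nhds.add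
            (tendsto_pow_atTop_nhds_zero_of_lt_one (by norm_num) (by norm_num))
        rw [add_zero] at hlim
        exact tendsto_of_tendsto_of_tendsto_of_le_of_le tendsto_const_nhds hlim hql hqu
      have hqpos : ∀ n, 0 < q n := fun n => lt_of_lt_of_le hs0' (hql n)
      have hbound : ∀ n, ‖cpowAux A (q n) * cpowAux B (q n)‖ ≤ ‖A * B‖ ^ (q n) := by
        intro n
        have hk : ⌈s * 2 ^ n⌉₊ ≤ 2 ^ n := by
          rw [Nat.ceil_le]
          push_cast
          nlinarith [pow_pos (show (0:ℝ) < 2 by norm_num) n]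
        have hdy := dyadicAux A B ha hb n ⌈s * 2 ^ n⌉₊ hk
        have hqn : q n = ((⌈s * 2 ^ n⌉₊ : ℕ) : ℝ) / 2 ^ n := rfl
        rw [hqn]
        calc ‖cpowAux A (((⌈s * 2 ^ n⌉₊ : ℕ) : ℝ) / 2 ^ n) *
                cpowAux B (((⌈s * 2 ^ n⌉₊ : ℕ) : ℝ) / 2 ^ n)‖
            = ((‖cpowAux A (((⌈s * 2 ^ n⌉₊ : ℕ) : ℝ) / 2 ^ n) *
                cpowAux B (((⌈s * 2 ^ n⌉₊ : ℕ) : ℝ) / 2 ^ n)‖₊ : NNReal) : ℝ) :=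
              (coe_nnnorm _).symm
          _ ≤ ((‖A * B‖₊ ^ (((⌈s * 2 ^ n⌉₊ : ℕ) : ℝ) / 2 ^ n) : NNReal) : ℝ) := by
              exact_mod_cast hdy
          _ = ‖A * B‖ ^ (((⌈s * 2 ^ n⌉₊ : ℕ) : ℝ) / 2 ^ n) := by
              rw [NNReal.coe_rpow, coe_nnnorm]
      have hA_t := cpowAux_tendsto A ha hs0' hq_tend hqpos
      have hB_t := cpowAux_tendsto B hb hs0' hq_tend hqpos
      have hlhs : Tendsto (fun n => ‖cpowAux A (q n) * cpowAux B (q n)‖) atTop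
          (𝓝 ‖cpowAux A s * cpowAux B s‖) := (hA_t.mul hB_t).norm
      have hrhs : Tendsto (fun n => ‖A * B‖ ^ (q n)) atTop (𝓝 (‖A * B‖ ^ s)) := by
        have hc : ContinuousAt (fun p : ℝ × ℝ => p.1 ^ p.2) (‖A * B‖, s) :=
          Real.continuousAt_rpow _ (Or.inr hs0')
        have hc2 : ContinuousAt (fun u : ℝ => ‖A * B‖ ^ u) s :=
          hc.comp ((continuous_const.prodMk continuous_id).continuousAt)
        exact hc2.tendsto.comp hq_tend
      exact le_of_tendsto_of_tendsto' hlhs hrhs hbound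
end

section
/- Let H be a separable complex Hilbert space, let A and B be bounded positive self-adjoint operators on H, let λ > 0, and suppose ‖ (A+λ)^{-1/2} (A − B) (A+λ)^{-1/2} ‖ ≤ a for some a ∈ [0,1), where (A+λ)^{±1/2} and (B+λ)^{±1/2} denote the positive square roots of the (boundedly invertible) positive operators A+λ and B+λ and their inverses. Then ‖ (A+λ)^{-1/2} (B+λ)^{1/2} ‖² ≤ 1 + a and ‖ (A+λ)^{1/2} (B+λ)^{-1/2} ‖² ≤ 1/(1 − a). -/
section Aux
variable {H : Type*} [NormedAddCommGroup H] [InnerProductSpace ℂ H] [CompleteSpace H]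

lemma stmt15_aux (X : H →L[ℂ] H) (hX : X.IsPositive) (lambda : ℝ) (hlam : 0 < lambda) :
    cfc (fun t : ℝ => Real.sqrt (t + lambda)) X * cfc (fun t : ℝ => Real.sqrt (t + lambda)) X
      = X + algebraMap ℝ _ lambda ∧
    cfc (fun t : ℝ => (Real.sqrt (t + lambda))⁻¹) X * cfc (fun t : ℝ => Real.sqrt (t + lambda)) X = 1 ∧
    cfc (fun t : ℝ => Real.sqrt (t + lambda)) X * cfc (fun t : ℝ => (Real.sqrt (t + lambda))⁻¹) X = 1 := by
  have h0 : (0:H →L[ℂ] H) ≤ X := (ContinuousLinearMap.nonneg_iff_isPositive X).mpr hX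
  have hsp : ∀ t ∈ spectrum ℝ X, 0 ≤ t := spectrum_nonneg_of_nonneg h0
  have hsa : IsSelfAdjoint X := hX.isSelfAdjoint
  have hcg : Continuous (fun t : ℝ => Real.sqrt (t + lambda)) := by fun_prop
  have hcf : ContinuousOn (fun t : ℝ => (Real.sqrt (t + lambda))⁻¹) (spectrum ℝ X) := by
    apply ContinuousOn.inv₀ hcg.continuousOn
    intro t ht
    have := hsp t ht
    positivity
  refine ⟨?_, ?_, ?_⟩
  · rw [← cfc_mul _ _ X hcg.continuousOn hcg.continuousOn]
    have h2 : cfc (fun t : ℝ => t + lambda) X = X + algebraMap ℝ _ lambda := by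
      rw [cfc_add_const lambda (fun t : ℝ => t) X, cfc_id' ℝ X]
    rw [← h2]
    apply cfc_congr
    intro t ht
    have h1 := hsp t ht
    exact Real.mul_self_sqrt (by positivity)
  · rw [← cfc_mul _ _ X hcf hcg.continuousOn, ← cfc_one (R := ℝ) X hsa]
    apply cfc_congr
    intro t ht
    have h1 := hsp t ht
    have h3 : Real.sqrt (t + lambda) ≠ 0 := by positivity
    simp only [Pi.one_apply]
    field_simp
  · rw [← cfc_mul _ _ X hcg.continuousOn hcf, ← cfc_one (R := ℝ) X hsa]
    apply cfc_congr
    intro t ht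
    have h1 := hsp t ht
    have h3 : Real.sqrt (t + lambda) ≠ 0 := by positivity
    simp only [Pi.one_apply]
    field_simp

lemma stmt15_sa (f : ℝ → ℝ) (X : H →L[ℂ] H) : IsSelfAdjoint (cfc f X) :=
  cfc_predicate f X

lemma stmt15_smul_nonneg {c : ℝ} (hc : 0 ≤ c) {X : H →L[ℂ] H} (hX : (0:H →L[ℂ] H) ≤ X) :
    (0:H →L[ℂ] H) ≤ c • X := by
  have h := star_left_conjugate_le_conjugate hX (Real.sqrt c • (1:H →L[ℂ] H))
  have hs : star (Real.sqrt c • (1:H →L[ℂ] H)) = Real.sqrt c • (1:H →L[ℂ] H) := by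
    rw [star_smul, star_one, star_trivial]
  rw [hs, mul_zero, zero_mul] at h
  calc (0:H →L[ℂ] H) ≤ Real.sqrt c • (1:H →L[ℂ] H) * X * (Real.sqrt c • (1:H →L[ℂ] H)) := h
    _ = c • X := by
      rw [smul_mul_assoc, one_mul, mul_smul_comm, mul_one, smul_smul, Real.mul_self_sqrt hc]

end Aux

/-- if `‖(A+λ)^{-1/2}(A-B)(A+λ)^{-1/2}‖ ≤ a < 1` for positive operators
`A, B` and `λ > 0` (square roots taken via the continuous functional calculus), then
`‖(A+λ)^{-1/2}(B+λ)^{1/2}‖² ≤ 1 + a` and `‖(A+λ)^{1/2}(B+λ)^{-1/2}‖² ≤ 1/(1-a)`. -/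
theorem stmt15 {H : Type*} [NormedAddCommGroup H] [InnerProductSpace ℂ H] [CompleteSpace H]
    [TopologicalSpace.SeparableSpace H]
    (A B : H →L[ℂ] H) (hA : A.IsPositive) (hB : B.IsPositive)
    (lambda : ℝ) (hlam : 0 < lambda) (a : ℝ) (ha : a ∈ Set.Ico (0:ℝ) 1)
    (hbound : ‖cfc (fun t : ℝ => (Real.sqrt (t + lambda))⁻¹) A * (A - B) *
        cfc (fun t : ℝ => (Real.sqrt (t + lambda))⁻¹) A‖ ≤ a) :
    ‖cfc (fun t : ℝ => (Real.sqrt (t + lambda))⁻¹) A *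
        cfc (fun t : ℝ => Real.sqrt (t + lambda)) B‖ ^ 2 ≤ 1 + a ∧
    ‖cfc (fun t : ℝ => Real.sqrt (t + lambda)) A *
        cfc (fun t : ℝ => (Real.sqrt (t + lambda))⁻¹) B‖ ^ 2 ≤ 1 / (1 - a) := by
  obtain ⟨hA1, hA2, hA3⟩ := stmt15_aux A hA lambda hlam
  obtain ⟨hB1, hB2, hB3⟩ := stmt15_aux B hB lambda hlam
  set RA := cfc (fun t : ℝ => (Real.sqrt (t + lambda))⁻¹) A with hRA
  set SA := cfc (fun t : ℝ => Real.sqrt (t + lambda)) A with hSA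
  set RB := cfc (fun t : ℝ => (Real.sqrt (t + lambda))⁻¹) B with hRB
  set SB := cfc (fun t : ℝ => Real.sqrt (t + lambda)) B with hSB
  have hRAsa : IsSelfAdjoint RA := stmt15_sa _ A
  have hSAsa : IsSelfAdjoint SA := stmt15_sa _ A
  have hRBsa : IsSelfAdjoint RB := stmt15_sa _ B
  have hSBsa : IsSelfAdjoint SB := stmt15_sa _ B
  set D := RA * (A - B) * RA with hD
  have hDsa : IsSelfAdjoint D := by
    have hABsa : IsSelfAdjoint (A - B) := hA.isSelfAdjoint.sub hB.isSelfAdjoint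
    simp only [hD, IsSelfAdjoint, star_mul, hRAsa.star_eq, hABsa.star_eq, mul_assoc]
  have haD : ‖D‖ ≤ a := hbound
  have ha1 : (0:ℝ) < 1 - a := by have := ha.2; linarith
  constructor
  · -- part 1
    have key : (RA * SB) * star (RA * SB) = 1 - D := by
      rw [star_mul, hSBsa.star_eq, hRAsa.star_eq]
      have e : RA * SB * (SB * RA) = RA * (B + algebraMap ℝ _ lambda) * RA := by
        rw [← hB1]; noncomm_ring
      rw [e]
      have h4 : B + algebraMap ℝ (H →L[ℂ] H) lambda = SA * SA - (A - B) := by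
        rw [hA1]; abel
      rw [h4, mul_sub, sub_mul, ← hD]
      congr 1
      calc RA * (SA * SA) * RA = (RA * SA) * (SA * RA) := by noncomm_ring
        _ = 1 := by rw [hA2, hA3, one_mul]
    have hn : ‖RA * SB‖ * ‖RA * SB‖ = ‖1 - D‖ := by
      rw [← key, CStarRing.norm_self_mul_star]
    rw [sq, hn]
    calc ‖(1:H →L[ℂ] H) - D‖ ≤ ‖(1:H →L[ℂ] H)‖ + ‖D‖ := norm_sub_le _ _
      _ ≤ 1 + a := add_le_add ContinuousLinearMap.norm_id_le haD
  · -- part 2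
    have hDle : D ≤ algebraMap ℝ _ a := by
      refine le_trans (IsSelfAdjoint.le_algebraMap_norm_self hDsa) ?_
      have h6 : algebraMap ℝ (H →L[ℂ] H) a - algebraMap ℝ _ ‖D‖ = (a - ‖D‖) • 1 := by
        simp only [Algebra.algebraMap_eq_smul_one, ← sub_smul]
      have h5 : (0:H →L[ℂ] H) ≤ (a - ‖D‖) • 1 := by
        refine stmt15_smul_nonneg (sub_nonneg.mpr haD) ?_
        exact (ContinuousLinearMap.nonneg_iff_isPositive _).mpr ContinuousLinearMap.isPositive_one
      rw [← sub_nonneg, h6]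
      exact h5
    have hAB : A - B ≤ a • (A + algebraMap ℝ _ lambda) := by
      have h7 := IsSelfAdjoint.conjugate_le_conjugate hDle hSAsa
      have l1 : SA * D * SA = A - B := by
        rw [hD]
        calc SA * (RA * (A - B) * RA) * SA = (SA * RA) * (A - B) * (RA * SA) := by noncomm_ring
          _ = A - B := by rw [hA3, hA2, one_mul, mul_one]
      have r1 : SA * algebraMap ℝ (H →L[ℂ] H) a * SA = a • (A + algebraMap ℝ _ lambda) := by
        rw [Algebra.algebraMap_eq_smul_one, mul_smul_comm, mul_one, smul_mul_assoc, hA1]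
      rwa [l1, r1] at h7
    have hkey : (1 - a) • (A + algebraMap ℝ _ lambda) ≤ B + algebraMap ℝ _ lambda := by
      rw [← sub_nonneg] at hAB ⊢
      have e2 : B + algebraMap ℝ (H →L[ℂ] H) lambda - (1 - a) • (A + algebraMap ℝ _ lambda)
          = a • (A + algebraMap ℝ _ lambda) - (A - B) := by module
      rw [e2]
      exact hAB
    have hconj := IsSelfAdjoint.conjugate_le_conjugate hkey hRBsa
    have r2 : RB * (B + algebraMap ℝ (H →L[ℂ] H) lambda) * RB = 1 := by
      rw [← hB1]
      calc RB * (SB * SB) * RB = (RB * SB) * (SB * RB) := by noncomm_ring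
        _ = 1 := by rw [hB2, hB3, one_mul]
    set M := SA * RB with hM
    have l2 : RB * ((1 - a) • (A + algebraMap ℝ (H →L[ℂ] H) lambda)) * RB
        = (1 - a) • (star M * M) := by
      rw [star_mul, hSAsa.star_eq, hRBsa.star_eq, ← hA1, mul_smul_comm, smul_mul_assoc]
      congr 1
    rw [l2, r2] at hconj
    have hEpos : (0:H →L[ℂ] H) ≤ star M * M := star_mul_self_nonneg M
    have hpos2 : (0:H →L[ℂ] H) ≤ (1 - a) • (star M * M) :=
      stmt15_smul_nonneg ha1.le hEpos
    have hnorm := CStarAlgebra.norm_le_norm_of_nonneg_of_le hpos2 hconj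
    have hfin : (1 - a) * (‖M‖ * ‖M‖) ≤ 1 := by
      have h8 : ‖(1 - a) • (star M * M)‖ = (1 - a) * ‖star M * M‖ := by
        rw [norm_smul, Real.norm_of_nonneg ha1.le]
      rw [h8, CStarRing.norm_star_mul_self] at hnorm
      exact hnorm.trans ContinuousLinearMap.norm_id_le
    rw [sq, le_div_iff₀ ha1]
    nlinarith [hfin]
end
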